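/- arXiv:2409.00224 — 3 statements merged into one kernel-verified Lean document; each statement's English description precedes it below -/
import Mathlib

section
/- Let A ∈ M_2(ℂ)^{⊗n} and J ⊆ [n]. Then Σ_{k=1}^{3} Σ_{j∈J} Inf[g_{j,k}] ≤ Inf[A], where g_{j,k} = τ_J(A·σ_{k(j)}) is regarded as an element of M_2(ℂ)^{⊗n} by tensoring with the identity on the qubits in J. -/
open scoped BigOperators
open Matrix

noncomputable section

/-- The index set of the `n`-qubit Hilbert space `(ℂ²)^{⊗n}`. -/
abbrev QIdx (n : ℕ) := Fin n → Fin 2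

/-- The algebra `M_2(ℂ)^{⊗n} ≅ M_{2^n}(ℂ)` of observables on `n` qubits. -/
abbrev QOp (n : ℕ) := Matrix (QIdx n) (QIdx n) ℂ

/-- The four Pauli matrices `σ_0, σ_1, σ_2, σ_3`. -/
def pauli : Fin 4 → Matrix (Fin 2) (Fin 2) ℂ :=
  ![!![1, 0; 0, 1], !![0, 1; 1, 0], !![0, -Complex.I; Complex.I, 0], !![1, 0; 0, -1]]

/-- The Pauli string `σ_s = σ_{s_1} ⊗ ⋯ ⊗ σ_{s_n}`. -/
def pauliString {n : ℕ} (s : Fin n → Fin 4) : QOp n :=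
  Matrix.of fun x y => ∏ j, pauli (s j) (x j) (y j)

/-- The normalized trace `τ(A) = 2^{-n} tr(A)`. -/
def ntrace {n : ℕ} (A : QOp n) : ℂ := (2 ^ n : ℂ)⁻¹ * A.trace

/-- The Pauli (Fourier) coefficient `Â_s = τ(σ_s A)`. -/
def coef {n : ℕ} (A : QOp n) (s : Fin n → Fin 4) : ℂ := ntrace (pauliString s * A)

/-- The support `{j : s_j ≠ 0}` of a Pauli index. -/
def psupp {n : ℕ} (s : Fin n → Fin 4) : Finset (Fin n) :=
  Finset.univ.filter fun j => s j ≠ 0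

/-- `τ(|A|^p)`, computed via the eigenvalues of `Aᴴ A` (so `|A| = (AᴴA)^{1/2}`). -/
def traceAbsPow {n : ℕ} (p : ℝ) (A : QOp n) : ℝ :=
  (2 ^ n : ℝ)⁻¹ * ∑ i, ((Matrix.isHermitian_conjTranspose_mul_self A).eigenvalues i) ^ (p / 2)

/-- The normalized Schatten `p`-norm `‖A‖_p = τ(|A|^p)^{1/p}`. -/
def pnorm {n : ℕ} (p : ℝ) (A : QOp n) : ℝ := traceAbsPow p A ^ (1 / p)

/-- The operator norm `‖A‖ = ‖A‖_∞`. -/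
def opNorm {n : ℕ} (A : QOp n) : ℝ := ‖Matrix.toEuclideanCLM (𝕜 := ℂ) A‖

/-- The `j`-th derivative `d_j(A) = (I - E_j)(A) = ∑_{s : s_j ≠ 0} Â_s σ_s`. -/
def dOp {n : ℕ} (j : Fin n) (A : QOp n) : QOp n :=
  ∑ s ∈ Finset.univ.filter (fun s : Fin n → Fin 4 => s j ≠ 0), coef A s • pauliString s

/-- The derivative `d_J = ∏_{j ∈ J} d_j` for a subset `J ⊆ [n]`:
`d_J(A) = ∑_{s : J ⊆ supp s} Â_s σ_s`. -/
def dSet {n : ℕ} (J : Finset (Fin n)) (A : QOp n) : QOp n :=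
  ∑ s ∈ Finset.univ.filter (fun s : Fin n → Fin 4 => ∀ j ∈ J, s j ≠ 0),
    coef A s • pauliString s

/-- The conditional expectation `E_J` killing all Pauli terms meeting `J`
(i.e. the normalized partial trace `τ_J` over the qubits in `J`, re-embedded in
`M_2(ℂ)^{⊗n}` by tensoring with the identity on the qubits in `J`). -/
def eSet {n : ℕ} (J : Finset (Fin n)) (A : QOp n) : QOp n :=
  ∑ s ∈ Finset.univ.filter (fun s : Fin n → Fin 4 => ∀ j ∈ J, s j = 0),
    coef A s • pauliString s

/-- `σ_{k(j)}` : the Pauli matrix `σ_k` on the `j`-th factor and identity elsewhere. -/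
def sigmaAt {n : ℕ} (j : Fin n) (k : Fin 4) : QOp n :=
  pauliString fun i => if i = j then k else 0

/-- The `j`-th `L^p`-influence `Inf^p_j[A] = ‖d_j(A)‖_p^p`. -/
def infP {n : ℕ} (p : ℝ) (j : Fin n) (A : QOp n) : ℝ := traceAbsPow p (dOp j A)

/-- The total `L^p`-influence `Inf^p[A] = ∑_j Inf^p_j[A]`. -/
def infPTotal {n : ℕ} (p : ℝ) (A : QOp n) : ℝ := ∑ j, infP p j A

/-- The `L^p`-influence of a subset, `Inf^p_J[A] = ‖d_J(A)‖_p^p`. -/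
def infPSet {n : ℕ} (p : ℝ) (J : Finset (Fin n)) (A : QOp n) : ℝ := traceAbsPow p (dSet J A)

/-- The variance `Var[A] = ‖A - τ(A)1‖_2²`. -/
def var {n : ℕ} (A : QOp n) : ℝ := traceAbsPow 2 (A - ntrace A • 1)

/-- The noise operator `T_δ(A) = ∑_s δ^{|supp s|} Â_s σ_s`. -/
def noiseOp {n : ℕ} (δ : ℝ) (A : QOp n) : QOp n :=
  ∑ s : Fin n → Fin 4, ((δ : ℂ) ^ (psupp s).card * coef A s) • pauliString s

/-- The soft chunk `B_d = (T_{1-1/(3d)} - T_{1-1/(2d)})(A)`. -/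
def softChunk {n : ℕ} (d : ℕ) (A : QOp n) : QOp n :=
  noiseOp (1 - 1 / (3 * (d : ℝ))) A - noiseOp (1 - 1 / (2 * (d : ℝ))) A

/-- `W_{≥k}[A] = ∑_{|supp s| ≥ k} |Â_s|²`. -/
def wGE {n : ℕ} (k : ℕ) (A : QOp n) : ℝ :=
  ∑ s ∈ Finset.univ.filter (fun s : Fin n → Fin 4 => k ≤ (psupp s).card), ‖coef A s‖ ^ 2

/-- `W_{≈d}[A] = ∑_{d ≤ |supp s| < 2d} |Â_s|²`. -/
def wApprox {n : ℕ} (d : ℕ) (A : QOp n) : ℝ :=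
  ∑ s ∈ Finset.univ.filter
      (fun s : Fin n → Fin 4 => d ≤ (psupp s).card ∧ (psupp s).card < 2 * d),
    ‖coef A s‖ ^ 2

/-- `W_J(A) = ∑_{|supp v ∩ J| = 1} |Â_v|²`. -/
def wSet {n : ℕ} (J : Finset (Fin n)) (A : QOp n) : ℝ :=
  ∑ v ∈ Finset.univ.filter (fun v : Fin n → Fin 4 => (psupp v ∩ J).card = 1), ‖coef A v‖ ^ 2

/-- The noise stability `S_δ[A] = ∑_{s ≠ 0} δ^{|supp s|} |Â_s|²`. -/
def noiseStab {n : ℕ} (δ : ℝ) (A : QOp n) : ℝ :=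
  ∑ s ∈ Finset.univ.filter (fun s : Fin n → Fin 4 => s ≠ 0),
    δ ^ (psupp s).card * ‖coef A s‖ ^ 2

/-- The partial Fourier series `∂_J^γ(A) = ∑_{s : s_J = γ} Â_s σ_{s_{J^c}}`,
encoded by a single Pauli index `v` with `supp v = J` and `v|_J = γ ∈ {1,2,3}^J`,
re-embedded in `M_2(ℂ)^{⊗n}` by tensoring with the identity on the qubits in `J`. -/
def dPartial {n : ℕ} (v : Fin n → Fin 4) (A : QOp n) : QOp n :=
  ∑ s ∈ Finset.univ.filter (fun s : Fin n → Fin 4 => ∀ j ∈ psupp v, s j = v j),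
    coef A s • pauliString fun j => if j ∈ psupp v then 0 else s j



namespace InfAux

variable {n : ℕ}

/-- Entrywise tensor-product matrix. -/
def tpow (M : Fin n → Matrix (Fin 2) (Fin 2) ℂ) : QOp n :=
  Matrix.of fun x y => ∏ j, M j (x j) (y j)

lemma pauliString_eq_tpow (s : Fin n → Fin 4) :
    pauliString s = tpow fun j => pauli (s j) := rfl

lemma tpow_mul (M N : Fin n → Matrix (Fin 2) (Fin 2) ℂ) :
    tpow M * tpow N = tpow fun j => (M j) * (N j) := by
  ext x z
  show ∑ y : QIdx n, (∏ j, M j (x j) (y j)) * ∏ j, N j (y j) (z j)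
      = ∏ j, (M j * N j) (x j) (z j)
  calc ∑ y : QIdx n, (∏ j, M j (x j) (y j)) * ∏ j, N j (y j) (z j)
      = ∑ y : QIdx n, ∏ j, (M j (x j) (y j) * N j (y j) (z j)) := by
        simp [Finset.prod_mul_distrib]
    _ = ∏ j, ∑ b, M j (x j) b * N j b (z j) :=
        (Fintype.prod_sum fun j b => M j (x j) b * N j b (z j)).symm
    _ = ∏ j, (M j * N j) (x j) (z j) := by
        simp [Matrix.mul_apply]

lemma trace_tpow (M : Fin n → Matrix (Fin 2) (Fin 2) ℂ) :
    (tpow M).trace = ∏ j, (M j).trace := by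
  show ∑ x : QIdx n, ∏ j, M j (x j) (x j) = ∏ j, ∑ a, M j a a
  exact Fintype.prod_sum (fun j a => M j a a) |>.symm

lemma pauli_zero : pauli 0 = 1 := by
  ext i j
  fin_cases i <;> fin_cases j <;> simp [pauli]

lemma trace_pauli_mul (a b : Fin 4) :
    (pauli a * pauli b).trace = if a = b then 2 else 0 := by
  fin_cases a <;> fin_cases b <;>
    simp [pauli, Matrix.trace, Matrix.diag, Matrix.mul_apply, Fin.sum_univ_two,
      Complex.I_mul_I] <;> ring_nf

lemma star_pauli (a : Fin 4) (i j : Fin 2) :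
    star (pauli a i j) = pauli a j i := by
  fin_cases a <;> fin_cases i <;> fin_cases j <;> simp [pauli]

lemma pauliString_conjTranspose (s : Fin n → Fin 4) :
    (pauliString s)ᴴ = pauliString s := by
  ext x y
  show star (∏ j, pauli (s j) (y j) (x j)) = ∏ j, pauli (s j) (x j) (y j)
  rw [star_prod]
  exact Finset.prod_congr rfl fun j _ => star_pauli _ _ _

lemma trace_pauliString_mul (s t : Fin n → Fin 4) :
    (pauliString s * pauliString t).trace = if s = t then (2 : ℂ) ^ n else 0 := by
  rw [pauliString_eq_tpow, pauliString_eq_tpow, tpow_mul, trace_tpow]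
  simp only [trace_pauli_mul]
  by_cases h : s = t
  · subst h; simp
  · rw [if_neg h]
    obtain ⟨j, hj⟩ := Function.ne_iff.mp h
    exact Finset.prod_eq_zero (Finset.mem_univ j) (if_neg hj)

lemma sum_eigenvalues_eq {m : Type*} [Fintype m] [DecidableEq m] {M : Matrix m m ℂ}
    (hM : M.IsHermitian) : ∑ i, hM.eigenvalues i = M.trace.re := by
  have h : M.trace = ∑ i, (hM.eigenvalues i : ℂ) := by
    exact hM.trace_eq_sum_eigenvalues
  rw [h, Complex.re_sum]
  simp

lemma traceAbsPow_two (B : QOp n) :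
    traceAbsPow 2 B = (2 ^ n : ℝ)⁻¹ * (Bᴴ * B).trace.re := by
  unfold traceAbsPow
  rw [← sum_eigenvalues_eq (Matrix.isHermitian_conjTranspose_mul_self B)]
  norm_num

lemma coef_sum_smul (S : Finset (Fin n → Fin 4)) (c : (Fin n → Fin 4) → ℂ)
    (s : Fin n → Fin 4) :
    coef (∑ t ∈ S, c t • pauliString t) s = if s ∈ S then c s else 0 := by
  unfold coef ntrace
  rw [Finset.mul_sum, Matrix.trace_sum]
  simp_rw [Matrix.mul_smul, Matrix.trace_smul, smul_eq_mul, trace_pauliString_mul,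
    mul_ite, mul_zero, Finset.mul_sum, mul_ite, mul_zero, Finset.sum_ite_eq]
  have h2 : ((2:ℂ)^n) ≠ 0 := pow_ne_zero _ two_ne_zero
  split <;> [field_simp; ring]

lemma parseval (S : Finset (Fin n → Fin 4)) (c : (Fin n → Fin 4) → ℂ) :
    traceAbsPow 2 (∑ s ∈ S, c s • pauliString s) = ∑ s ∈ S, ‖c s‖ ^ 2 := by
  rw [traceAbsPow_two]
  have h2 : ((2:ℝ)^n) ≠ 0 := pow_ne_zero _ two_ne_zero
  have h : ((∑ s ∈ S, c s • pauliString s)ᴴ * ∑ s ∈ S, c s • pauliString s).trace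
      = ((((2:ℝ)^n) * ∑ s ∈ S, ‖c s‖^2 : ℝ) : ℂ) := by
    rw [Matrix.conjTranspose_sum]
    simp_rw [Matrix.conjTranspose_smul, pauliString_conjTranspose]
    rw [Finset.sum_mul_sum]
    simp_rw [Matrix.smul_mul, Matrix.mul_smul, smul_smul, Matrix.trace_sum,
      Matrix.trace_smul, smul_eq_mul, trace_pauliString_mul, mul_ite, mul_zero,
      Finset.sum_ite_eq]
    push_cast
    rw [Finset.mul_sum]
    refine Finset.sum_congr rfl fun s hs => ?_
    rw [if_pos hs, Complex.star_def]
    have hcc : (starRingEnd ℂ) (c s) * c s = ((‖c s‖^2 : ℝ) : ℂ) := by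
      rw [mul_comm, Complex.mul_conj, Complex.normSq_eq_norm_sq]
    rw [hcc]
    push_cast; ring
  rw [h, Complex.ofReal_re, ← mul_assoc, inv_mul_cancel₀ h2, one_mul]

/-- weight function -/
def fwt (A : QOp n) (v : Fin n → Fin 4) : ℝ := ((psupp v).card : ℝ) * ‖coef A v‖ ^ 2

lemma infP_two (j : Fin n) (A : QOp n) :
    infP 2 j A
      = ∑ s ∈ Finset.univ.filter (fun s : Fin n → Fin 4 => s j ≠ 0), ‖coef A s‖ ^ 2 := by
  unfold infP dOp
  exact parseval _ _

lemma infPTotal_two (A : QOp n) :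
    infPTotal 2 A = ∑ s : Fin n → Fin 4, ((psupp s).card : ℝ) * ‖coef A s‖ ^ 2 := by
  unfold infPTotal
  simp_rw [infP_two, Finset.sum_filter]
  rw [Finset.sum_comm]
  refine Finset.sum_congr rfl fun s _ => ?_
  rw [← Finset.sum_filter]
  show ∑ _j ∈ psupp s, ‖coef A s‖ ^ 2 = _
  rw [Finset.sum_const, nsmul_eq_mul]

lemma sigmaAt_mul_pauliString (j : Fin n) (k : Fin 4) (s : Fin n → Fin 4) (hs : s j = 0) :
    sigmaAt j k * pauliString s = pauliString (Function.update s j k) := by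
  unfold sigmaAt
  rw [pauliString_eq_tpow, pauliString_eq_tpow, pauliString_eq_tpow, tpow_mul]
  have hfun : (fun i => pauli (if i = j then k else 0) * pauli (s i))
      = fun i => pauli (Function.update s j k i) := by
    funext i
    by_cases h : i = j
    · subst h; simp [Function.update_self, hs, pauli_zero]
    · simp [Function.update_of_ne h, h, pauli_zero]
  rw [hfun]

lemma coef_mul_sigmaAt (A : QOp n) (j : Fin n) (k : Fin 4) (s : Fin n → Fin 4)
    (hs : s j = 0) :
    coef (A * sigmaAt j k) s = coef A (Function.update s j k) := by
  unfold coef ntrace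
  congr 1
  rw [← mul_assoc, Matrix.trace_mul_comm, ← mul_assoc, sigmaAt_mul_pauliString j k s hs]

lemma card_psupp_update (s : Fin n → Fin 4) (j : Fin n) (k : Fin 4)
    (hs : s j = 0) (hk : k ≠ 0) :
    (psupp (Function.update s j k)).card = (psupp s).card + 1 := by
  have h1 : psupp (Function.update s j k) = insert j (psupp s) := by
    ext i
    unfold psupp
    by_cases h : i = j
    · subst h; simp [Function.update_self, hk]
    · simp [Function.update_of_ne h, h]
  rw [h1, Finset.card_insert_of_notMem]
  unfold psupp
  simp [hs]

lemma infPTotal_eSet (B : QOp n) (J : Finset (Fin n)) :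
    infPTotal 2 (eSet J B)
      = ∑ s ∈ Finset.univ.filter (fun s : Fin n → Fin 4 => ∀ i ∈ J, s i = 0),
          ((psupp s).card : ℝ) * ‖coef B s‖ ^ 2 := by
  rw [infPTotal_two, Finset.sum_filter]
  refine Finset.sum_congr rfl fun s _ => ?_
  unfold eSet
  rw [coef_sum_smul]
  simp only [Finset.mem_filter, Finset.mem_univ, true_and]
  split
  · rfl
  · simp

end InfAux

open InfAux in
/-- **Lemma 3.4**: `∑_{k=1}^3 ∑_{j∈J} Inf[g_{j,k}] ≤ Inf[A]`, where
`g_{j,k} = τ_J(A σ_{k(j)})` is regarded as an element of `M_2(ℂ)^{⊗n}`. -/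
theorem influence_of_restrictions (n : ℕ) (A : QOp n) (J : Finset (Fin n)) :
    ∑ k ∈ ({1, 2, 3} : Finset (Fin 4)), ∑ j ∈ J,
        infPTotal 2 (eSet J (A * sigmaAt j k))
      ≤ infPTotal 2 A := by
  classical
  have hK : ∀ k ∈ ({1, 2, 3} : Finset (Fin 4)), k ≠ 0 := by decide
  set S0 := Finset.univ.filter (fun s : Fin n → Fin 4 => ∀ i ∈ J, s i = 0) with hS0
  have hL : ∀ k ∈ ({1, 2, 3} : Finset (Fin 4)), ∀ j ∈ J,
      infPTotal 2 (eSet J (A * sigmaAt j k))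
        = ∑ s ∈ S0, ((psupp s).card : ℝ) * ‖coef A (Function.update s j k)‖ ^ 2 := by
    intro k hk j hj
    rw [infPTotal_eSet]
    refine Finset.sum_congr rfl fun s hs => ?_
    have hsj : s j = 0 := (Finset.mem_filter.mp hs).2 j hj
    rw [coef_mul_sigmaAt A j k s hsj]
  calc ∑ k ∈ ({1, 2, 3} : Finset (Fin 4)), ∑ j ∈ J, infPTotal 2 (eSet J (A * sigmaAt j k))
      ≤ ∑ k ∈ ({1, 2, 3} : Finset (Fin 4)), ∑ j ∈ J, ∑ s ∈ S0,
          fwt A (Function.update s j k) := by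
        refine Finset.sum_le_sum fun k hk => Finset.sum_le_sum fun j hj => ?_
        rw [hL k hk j hj]
        refine Finset.sum_le_sum fun s hs => ?_
        have hsj : s j = 0 := (Finset.mem_filter.mp hs).2 j hj
        unfold fwt
        rw [card_psupp_update s j k hsj (hK k hk)]
        have hle : ((psupp s).card : ℝ) ≤ (((psupp s).card + 1 : ℕ) : ℝ) := by
          exact_mod_cast Nat.le_succ _
        exact mul_le_mul_of_nonneg_right hle (by positivity)
    _ = ∑ p ∈ ({1, 2, 3} : Finset (Fin 4)) ×ˢ (J ×ˢ S0),
          fwt A (Function.update p.2.2 p.2.1 p.1) := by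
        refine Eq.symm ?_
        rw [Finset.sum_product]
        exact Finset.sum_congr rfl fun k _ => by rw [Finset.sum_product]
    _ = ∑ v ∈ (({1, 2, 3} : Finset (Fin 4)) ×ˢ (J ×ˢ S0)).image
          (fun p : Fin 4 × Fin n × (Fin n → Fin 4) => Function.update p.2.2 p.2.1 p.1),
          fwt A v := by
        refine (Finset.sum_image ?_).symm
        rintro ⟨k, j, s⟩ hp ⟨k', j', s'⟩ hp' h
        dsimp only at h ⊢
        simp only [Finset.mem_coe, Finset.mem_product] at hp hp'
        obtain ⟨hk, hj, hs⟩ := hp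
        obtain ⟨hk', hj', hs'⟩ := hp'
        have hsj : ∀ i ∈ J, s i = 0 := (Finset.mem_filter.mp hs).2
        have hsj' : ∀ i ∈ J, s' i = 0 := (Finset.mem_filter.mp hs').2
        by_cases hjj : j = j'
        · subst hjj
          have hkk : k = k' := by
            have h0 := congrFun h j
            simpa [Function.update_self] using h0
          have hss : s = s' := by
            funext i
            by_cases hij : i = j
            · subst hij; rw [hsj i hj, hsj' i hj]
            · have h0 := congrFun h i
              simpa [Function.update_of_ne hij] using h0
          simp [hkk, hss]
        · exfalso
          apply hK k hk
          have h0 := congrFun h j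
          rw [Function.update_self, Function.update_of_ne hjj] at h0
          rw [h0]
          exact hsj' j hj
    _ ≤ ∑ v : Fin n → Fin 4, fwt A v :=
        Finset.sum_le_sum_of_subset_of_nonneg (Finset.subset_univ _)
          (fun v _ _ => by unfold fwt; positivity)
    _ = infPTotal 2 A := by
        rw [infPTotal_two A]; rfl

end
end

section
/- Let A ∈ M_2(ℂ)^{⊗n} with ‖A‖ ≤ 1 and define D_good = {d = 2^l, l a nonnegative integer : W_{≈d}[A] ≥ Var[A]² / (16·Inf^1[A])}. Then Var[A] ≤ 4·Σ_{d ∈ D_good} W_{≈d}[A]. -/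
set_option maxHeartbeats 1000000
set_option synthInstance.maxHeartbeats 400000


open scoped BigOperators
open Matrix

noncomputable section

section AuxProofs
variable {n : ℕ}

lemma pauli_mul_trace (k m : Fin 4) : (pauli k * pauli m).trace = if k = m then 2 else 0 := by
  fin_cases k <;> fin_cases m <;>
    simp [pauli, Matrix.trace, Matrix.mul_apply, Fin.sum_univ_succ, Complex.I_mul_I] <;> norm_num

lemma pauli_complete (a b c d : Fin 2) :
    ∑ k : Fin 4, pauli k a b * pauli k c d = if a = d ∧ b = c then 2 else 0 := by
  fin_cases a <;> fin_cases b <;> fin_cases c <;> fin_cases d <;>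
    simp [pauli, Fin.sum_univ_succ, Complex.I_mul_I] <;> norm_num

lemma pauli_conj (k : Fin 4) (a b : Fin 2) :
    starRingEnd ℂ (pauli k a b) = pauli k b a := by
  fin_cases k <;> fin_cases a <;> fin_cases b <;> simp [pauli]

variable {n : ℕ}

lemma prod_trace (M : Fin n → Matrix (Fin 2) (Fin 2) ℂ) :
    (Matrix.of fun x y : QIdx n => ∏ j, M j (x j) (y j)).trace = ∏ j, (M j).trace := by
  simp only [Matrix.trace, Matrix.diag, Matrix.of_apply]
  rw [Finset.prod_univ_sum, Fintype.piFinset_univ]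

lemma pauliString_mul_apply (s t : Fin n → Fin 4) (x y : QIdx n) :
    (pauliString s * pauliString t) x y = ∏ j, (pauli (s j) * pauli (t j)) (x j) (y j) := by
  simp only [Matrix.mul_apply, pauliString, Matrix.of_apply, ← Finset.prod_mul_distrib]
  rw [Finset.prod_univ_sum, Fintype.piFinset_univ]

lemma pauliString_mul_eq (s t : Fin n → Fin 4) :
    pauliString s * pauliString t =
      Matrix.of fun x y => ∏ j, (pauli (s j) * pauli (t j)) (x j) (y j) := by
  ext x y; exact pauliString_mul_apply s t x y

lemma ntrace_pauliString_mul (s t : Fin n → Fin 4) :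
    ntrace (pauliString s * pauliString t) = if s = t then 1 else 0 := by
  rw [ntrace, pauliString_mul_eq, prod_trace]
  have : ∀ j, (pauli (s j) * pauli (t j)).trace = if s j = t j then 2 else 0 :=
    fun j => pauli_mul_trace _ _
  simp only [this]
  rw [show ((2:ℂ)^n)⁻¹ = ∏ _j : Fin n, (2:ℂ)⁻¹ by
    simp [Finset.prod_const]
  , ← Finset.prod_mul_distrib]
  have : ∀ j : Fin n, (2:ℂ)⁻¹ * (if s j = t j then 2 else 0) = if s j = t j then 1 else 0 := by
    intro j; split <;> norm_num
  simp only [this, Finset.prod_boole]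
  by_cases h : s = t
  · simp [h]
  · rw [if_neg h, if_neg]; intro hc; exact h (funext fun j => hc j (Finset.mem_univ j))

lemma pauliString_expand (A : QOp n) : ∑ s, coef A s • pauliString s = A := by
  ext x y
  simp only [Finset.sum_apply, Matrix.sum_apply, Matrix.smul_apply, smul_eq_mul, coef, ntrace,
    Matrix.trace, Matrix.diag, Matrix.mul_apply, pauliString, Matrix.of_apply]
  -- goal: ∑ s, (2^n)⁻¹ * (∑ u, ∑ v, (∏ j, pauli (s j) (u j) (v j)) * A v u) * ∏ j, pauli (s j) (x j) (y j) = A x y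
  have key : ∀ u v : QIdx n,
      (∑ s : Fin n → Fin 4, (∏ j, pauli (s j) (u j) (v j)) * ∏ j, pauli (s j) (x j) (y j))
        = if u = y ∧ v = x then (2:ℂ)^n else 0 := by
    intro u v
    have : ∀ s : Fin n → Fin 4, (∏ j, pauli (s j) (u j) (v j)) * ∏ j, pauli (s j) (x j) (y j)
        = ∏ j, (pauli (s j) (u j) (v j) * pauli (s j) (x j) (y j)) := by
      intro s; rw [Finset.prod_mul_distrib]
    simp only [this]
    have hps := Finset.prod_univ_sum (fun _ : Fin n => (Finset.univ : Finset (Fin 4)))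
      (fun j k => pauli k (u j) (v j) * pauli k (x j) (y j))
    rw [Fintype.piFinset_univ] at hps
    rw [← hps]
    simp only [pauli_complete]
    by_cases h : u = y ∧ v = x
    · simp [h.1, h.2, Finset.prod_const]
    · rw [if_neg h]
      have : ∃ j : Fin n, ¬(u j = y j ∧ v j = x j) := by
        by_contra hc
        push_neg at hc
        exact h ⟨funext fun j => (hc j).1, funext fun j => (hc j).2⟩
      obtain ⟨j, hj⟩ := this
      exact Finset.prod_eq_zero (Finset.mem_univ j) (by rw [if_neg hj])
  calc (∑ s : Fin n → Fin 4, ((2:ℂ)^n)⁻¹ * (∑ u, ∑ v, (∏ j, pauli (s j) (u j) (v j)) * A v u)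
          * ∏ j, pauli (s j) (x j) (y j))
      = ∑ u, ∑ v, ((2:ℂ)^n)⁻¹ * A v u *
          (∑ s : Fin n → Fin 4, (∏ j, pauli (s j) (u j) (v j)) * ∏ j, pauli (s j) (x j) (y j)) := by
        simp only [Finset.mul_sum, Finset.sum_mul]
        rw [Finset.sum_comm]
        refine Finset.sum_congr rfl fun u _ => ?_
        rw [Finset.sum_comm]
        refine Finset.sum_congr rfl fun v _ => ?_
        refine Finset.sum_congr rfl fun s _ => ?_
        ring
    _ = A x y := by
        simp only [key]
        rw [Finset.sum_eq_single y]
        · rw [Finset.sum_eq_single x]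
          · rw [if_pos ⟨rfl, rfl⟩]
            have h2 : ((2:ℂ)^n) ≠ 0 := pow_ne_zero _ two_ne_zero
            field_simp
          · intro v _ hv; rw [if_neg (by simp [hv]), mul_zero]
          · simp
        · intro u _ hu
          rw [Finset.sum_eq_zero]
          intro v _; rw [if_neg (by simp [hu]), mul_zero]
        · simp

lemma ntrace_smul (c : ℂ) (A : QOp n) : ntrace (c • A) = c * ntrace A := by
  simp [ntrace, Matrix.trace_smul]; ring

lemma ntrace_sum {ι : Type*} (F : Finset ι) (f : ι → QOp n) :
    ntrace (∑ i ∈ F, f i) = ∑ i ∈ F, ntrace (f i) := by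
  simp [ntrace, Matrix.trace_sum, Finset.mul_sum]

lemma coef_pauliSum (F : Finset (Fin n → Fin 4)) (c : (Fin n → Fin 4) → ℂ)
    (s : Fin n → Fin 4) :
    coef (∑ t ∈ F, c t • pauliString t) s = if s ∈ F then c s else 0 := by
  unfold coef
  rw [Matrix.mul_sum, ntrace_sum]
  have : ∀ t, ntrace (pauliString s * (c t • pauliString t))
      = c t * (if s = t then 1 else 0) := by
    intro t
    rw [Matrix.mul_smul, ntrace_smul, ntrace_pauliString_mul]
  simp only [this, mul_ite, mul_one, mul_zero]
  exact Finset.sum_ite_eq F s c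

lemma coef_eq_of_expansion (c : (Fin n → Fin 4) → ℂ) (s : Fin n → Fin 4) :
    coef (∑ t, c t • pauliString t) s = c s := by
  rw [coef_pauliSum]; simp

lemma pauliString_conjTranspose (s : Fin n → Fin 4) :
    (pauliString s)ᴴ = pauliString s := by
  ext x y
  simp only [Matrix.conjTranspose_apply, pauliString, Matrix.of_apply]
  rw [show (star (∏ j, pauli (s j) (y j) (x j)) = ∏ j, starRingEnd ℂ (pauli (s j) (y j) (x j)))
    from map_prod (starRingEnd ℂ) _ _]
  exact Finset.prod_congr rfl fun j _ => pauli_conj _ _ _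

lemma ntrace_conjT_mul_self (A : QOp n) :
    ntrace (Aᴴ * A) = ∑ s, (‖coef A s‖ : ℂ)^2 := by
  conv_lhs => rw [← pauliString_expand A]
  rw [Matrix.conjTranspose_sum]
  simp only [Matrix.conjTranspose_smul, pauliString_conjTranspose]
  rw [Finset.sum_mul_sum, ntrace_sum]
  have h1 : ∀ t u : Fin n → Fin 4,
      ntrace ((star (coef A t) • pauliString t) * (coef A u • pauliString u))
      = star (coef A t) * (coef A u * (if t = u then 1 else 0)) := by
    intro t u
    rw [Matrix.smul_mul, Matrix.mul_smul, ntrace_smul, ntrace_smul, ntrace_pauliString_mul]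
  rw [Finset.sum_congr rfl fun t _ => ntrace_sum _ _]
  simp only [h1, mul_ite, mul_one, mul_zero]
  refine Finset.sum_congr rfl fun t _ => ?_
  rw [Finset.sum_ite_eq Finset.univ t (fun u => star (coef A t) * coef A u)]
  simp only [Finset.mem_univ, if_true]
  rw [show (star (coef A t)) = (starRingEnd ℂ) (coef A t) from rfl]
  exact_mod_cast RCLike.conj_mul (coef A t)

lemma sum_eigenvalues_eq_trace {A : QOp n} (hA : A.IsHermitian) :
    (∑ i, (hA.eigenvalues i : ℂ)) = A.trace := by
  exact hA.trace_eq_sum_eigenvalues.symm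

lemma traceAbsPow_two_eq (A : QOp n) : traceAbsPow 2 A = ∑ s, ‖coef A s‖^2 := by
  have hexp : ∀ i, ((Matrix.isHermitian_conjTranspose_mul_self A).eigenvalues i) ^ ((2:ℝ)/2)
      = ((Matrix.isHermitian_conjTranspose_mul_self A).eigenvalues i) := by
    intro i; rw [show ((2:ℝ)/2) = 1 by norm_num, Real.rpow_one]
  have h0 : ((traceAbsPow 2 A : ℝ) : ℂ) = ntrace (Aᴴ * A) := by
    rw [traceAbsPow, ntrace, ← sum_eigenvalues_eq_trace (Matrix.isHermitian_conjTranspose_mul_self A)]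
    simp only [hexp]
    push_cast
    ring
  rw [ntrace_conjT_mul_self] at h0
  have h1 : ((traceAbsPow 2 A : ℝ) : ℂ) = ((∑ s, ‖coef A s‖^2 : ℝ) : ℂ) := by
    rw [h0]; push_cast; ring
  exact_mod_cast h1

lemma eig_nonneg (A : QOp n) (i : QIdx n) :
    0 ≤ (Matrix.isHermitian_conjTranspose_mul_self A).eigenvalues i :=
  Matrix.eigenvalues_conjTranspose_mul_self_nonneg A i

lemma traceAbsPow_nonneg (p : ℝ) (A : QOp n) : 0 ≤ traceAbsPow p A := by
  apply mul_nonneg (by positivity)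
  exact Finset.sum_nonneg fun i _ => Real.rpow_nonneg (eig_nonneg A i) _

lemma opNorm_nonneg (A : QOp n) : 0 ≤ opNorm A := norm_nonneg _

lemma eigenvalue_le_sq (A : QOp n) (i : QIdx n) :
    (Matrix.isHermitian_conjTranspose_mul_self A).eigenvalues i ≤ opNorm A ^ 2 := by
  have h1 : (Matrix.isHermitian_conjTranspose_mul_self A).eigenvalues i ∈ spectrum ℝ (Aᴴ * A) :=
    (Matrix.isHermitian_conjTranspose_mul_self A).eigenvalues_mem_spectrum_real i
  have h2 : (((Matrix.isHermitian_conjTranspose_mul_self A).eigenvalues i : ℂ))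
      ∈ spectrum ℂ (Aᴴ * A) := by
    rw [show (((Matrix.isHermitian_conjTranspose_mul_self A).eigenvalues i : ℂ))
      = algebraMap ℝ ℂ ((Matrix.isHermitian_conjTranspose_mul_self A).eigenvalues i) from rfl]
    exact spectrum.algebraMap_mem ℂ h1
  have h3 : (((Matrix.isHermitian_conjTranspose_mul_self A).eigenvalues i : ℂ))
      ∈ spectrum ℂ (Matrix.toEuclideanCLM (𝕜:=ℂ) (Aᴴ * A)) := by
    rw [AlgEquiv.spectrum_eq]; exact h2
  have h4 := spectrum.norm_le_norm_of_mem h3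
  have h5 : ‖Matrix.toEuclideanCLM (𝕜:=ℂ) (Aᴴ * A)‖ = opNorm A ^ 2 := by
    rw [show Aᴴ * A = star A * A from rfl, _root_.map_mul, map_star,
      ContinuousLinearMap.star_eq_adjoint, pow_two, opNorm]
    exact ContinuousLinearMap.norm_adjoint_comp_self _
  rw [h5] at h4
  calc (Matrix.isHermitian_conjTranspose_mul_self A).eigenvalues i
      ≤ |(Matrix.isHermitian_conjTranspose_mul_self A).eigenvalues i| := le_abs_self _
    _ = ‖(((Matrix.isHermitian_conjTranspose_mul_self A).eigenvalues i : ℂ))‖ := by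
        rw [Complex.norm_real]; rfl
    _ ≤ opNorm A ^ 2 := h4

lemma traceAbsPow_two_le (A : QOp n) : traceAbsPow 2 A ≤ opNorm A * traceAbsPow 1 A := by
  rw [traceAbsPow, traceAbsPow]
  have key : ∀ i : QIdx n, (Matrix.isHermitian_conjTranspose_mul_self A).eigenvalues i ^ ((2:ℝ)/2)
      ≤ opNorm A * (Matrix.isHermitian_conjTranspose_mul_self A).eigenvalues i ^ ((1:ℝ)/2) := by
    intro i
    set lam := (Matrix.isHermitian_conjTranspose_mul_self A).eigenvalues i with hlam
    have hl : 0 ≤ lam := eig_nonneg A i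
    rw [show ((2:ℝ)/2) = 1 by norm_num, Real.rpow_one, ← Real.sqrt_eq_rpow]
    have hs : Real.sqrt lam ≤ opNorm A := by
      have := Real.sqrt_le_sqrt (eigenvalue_le_sq A i)
      rwa [Real.sqrt_sq (opNorm_nonneg A)] at this
    calc lam = Real.sqrt lam * Real.sqrt lam := (Real.mul_self_sqrt hl).symm
      _ ≤ opNorm A * Real.sqrt lam :=
          mul_le_mul_of_nonneg_right hs (Real.sqrt_nonneg _)
  calc (2^n:ℝ)⁻¹ * ∑ i, (Matrix.isHermitian_conjTranspose_mul_self A).eigenvalues i ^ ((2:ℝ)/2)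
      ≤ (2^n:ℝ)⁻¹ * ∑ i, opNorm A * (Matrix.isHermitian_conjTranspose_mul_self A).eigenvalues i ^ ((1:ℝ)/2) := by
        apply mul_le_mul_of_nonneg_left _ (by positivity)
        exact Finset.sum_le_sum fun i _ => key i
    _ = opNorm A * ((2^n:ℝ)⁻¹ * ∑ i, (Matrix.isHermitian_conjTranspose_mul_self A).eigenvalues i ^ ((1:ℝ)/2)) := by
        rw [← Finset.mul_sum]; ring

lemma of_prod_mul (M N : Fin n → Matrix (Fin 2) (Fin 2) ℂ) :
    (Matrix.of fun x y : QIdx n => ∏ j, M j (x j) (y j)) *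
      (Matrix.of fun x y : QIdx n => ∏ j, N j (x j) (y j)) =
      Matrix.of fun x y : QIdx n => ∏ j, (M j * N j) (x j) (y j) := by
  ext x y
  simp only [Matrix.mul_apply, Matrix.of_apply, ← Finset.prod_mul_distrib]
  rw [Finset.prod_univ_sum, Fintype.piFinset_univ]

lemma pauli_mul_self (k : Fin 4) : pauli k * pauli k = 1 := by
  fin_cases k <;> ext a b <;> fin_cases a <;> fin_cases b <;>
    simp [pauli, Matrix.mul_apply, Fin.sum_univ_succ, Complex.I_mul_I, Matrix.one_apply] <;>
    norm_num

lemma pauliString_mul_self (s : Fin n → Fin 4) : pauliString s * pauliString s = 1 := by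
  rw [pauliString, of_prod_mul]
  ext x y
  simp only [Matrix.of_apply, pauli_mul_self, Matrix.one_apply]
  by_cases h : x = y
  · subst h; simp [Matrix.one_apply]
  · rw [if_neg h]
    have : ∃ j, x j ≠ y j := by
      by_contra hc; push_neg at hc; exact h (funext hc)
    obtain ⟨j, hj⟩ := this
    refine Finset.prod_eq_zero (Finset.mem_univ j) ?_
    simp [Matrix.one_apply, hj]

def eps (k m : Fin 4) : ℂ := if k = 0 ∨ m = 0 ∨ k = m then 1 else -1

lemma eps_zero_left (m : Fin 4) : eps 0 m = 1 := by simp [eps]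

lemma eps_sum (m : Fin 4) : ∑ k : Fin 4, eps k m = if m = 0 then 4 else 0 := by
  fin_cases m <;> simp (config := { decide := true }) [eps, Fin.sum_univ_succ]

lemma pauli_conj_eps (k m : Fin 4) : pauli k * pauli m * pauli k = eps k m • pauli m := by
  fin_cases k <;> fin_cases m <;> ext a b <;> fin_cases a <;> fin_cases b <;>
    simp [pauli, eps, Matrix.mul_apply, Fin.sum_univ_succ, Complex.I_mul_I] <;> norm_num

lemma sigmaAt_conj (j : Fin n) (k : Fin 4) (t : Fin n → Fin 4) :
    sigmaAt j k * pauliString t * sigmaAt j k = eps k (t j) • pauliString t := by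
  rw [sigmaAt, pauliString, pauliString, of_prod_mul, of_prod_mul]
  ext x y
  simp only [Matrix.of_apply, Matrix.smul_apply, pauliString, smul_eq_mul]
  have hterm : ∀ i : Fin n,
      (pauli (if i = j then k else 0) * pauli (t i) * pauli (if i = j then k else 0)) (x i) (y i)
      = eps (if i = j then k else 0) (t i) * pauli (t i) (x i) (y i) := by
    intro i
    rw [pauli_conj_eps]
    simp [Matrix.smul_apply]
  simp only [hterm]
  rw [Finset.prod_mul_distrib]
  congr 1
  rw [Finset.prod_eq_single j]
  · simp
  · intro i _ hij; rw [if_neg hij, eps_zero_left]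
  · intro h; exact absurd (Finset.mem_univ j) h

lemma eProj_eq (j : Fin n) (A : QOp n) :
    (∑ s ∈ Finset.univ.filter (fun s : Fin n → Fin 4 => s j = 0), coef A s • pauliString s)
      = (4:ℂ)⁻¹ • ∑ k : Fin 4, sigmaAt j k * A * sigmaAt j k := by
  conv_rhs => rw [← pauliString_expand A]
  have step : ∀ k : Fin 4, sigmaAt j k * (∑ t, coef A t • pauliString t) * sigmaAt j k
      = ∑ t, (coef A t * eps k (t j)) • pauliString t := by
    intro k
    rw [Matrix.mul_sum, Finset.sum_mul]
    refine Finset.sum_congr rfl fun t _ => ?_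
    rw [Matrix.mul_smul, Matrix.smul_mul, sigmaAt_conj, smul_smul]
  simp only [step]
  rw [Finset.sum_comm]
  have inner : ∀ t : Fin n → Fin 4,
      (∑ k : Fin 4, (coef A t * eps k (t j)) • pauliString t)
      = (coef A t * (if t j = 0 then (4:ℂ) else 0)) • pauliString t := by
    intro t
    rw [← Finset.sum_smul, ← Finset.mul_sum, eps_sum]
  simp only [inner]
  rw [Finset.smul_sum, Finset.sum_filter]
  refine Finset.sum_congr rfl fun t _ => ?_
  by_cases h : t j = 0
  · rw [if_pos h, if_pos h, smul_smul]
    congr 1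
    ring
  · rw [if_neg h, if_neg h]
    simp

lemma opNorm_pauliString (s : Fin n → Fin 4) : opNorm (pauliString s) = 1 := by
  haveI : Nontrivial (EuclideanSpace ℂ (QIdx n)) := inferInstance
  have hsq : opNorm (pauliString s) * opNorm (pauliString s) = 1 := by
    rw [opNorm, ← ContinuousLinearMap.norm_adjoint_comp_self
      (Matrix.toEuclideanCLM (𝕜:=ℂ) (pauliString s))]
    have : (ContinuousLinearMap.adjoint (Matrix.toEuclideanCLM (𝕜:=ℂ) (pauliString s))).comp
        (Matrix.toEuclideanCLM (𝕜:=ℂ) (pauliString s))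
        = Matrix.toEuclideanCLM (𝕜:=ℂ) ((pauliString s)ᴴ * pauliString s) := by
      rw [_root_.map_mul, ← Matrix.star_eq_conjTranspose, map_star,
        ContinuousLinearMap.star_eq_adjoint, ContinuousLinearMap.mul_def]
    rw [this, pauliString_conjTranspose, pauliString_mul_self, _root_.map_one]
    exact norm_one
  have h0 : 0 ≤ opNorm (pauliString s) := norm_nonneg _
  nlinarith [hsq, h0]

lemma opNorm_mul_le (A B : QOp n) : opNorm (A * B) ≤ opNorm A * opNorm B := by
  rw [opNorm, opNorm, opNorm, _root_.map_mul]
  exact norm_mul_le _ _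

lemma opNorm_eProj_le (j : Fin n) (A : QOp n) :
    opNorm (∑ s ∈ Finset.univ.filter (fun s : Fin n → Fin 4 => s j = 0),
      coef A s • pauliString s) ≤ opNorm A := by
  rw [eProj_eq]
  have h1 : ∀ k : Fin 4, opNorm (sigmaAt j k * A * sigmaAt j k) ≤ opNorm A := by
    intro k
    calc opNorm (sigmaAt j k * A * sigmaAt j k)
        ≤ opNorm (sigmaAt j k * A) * opNorm (sigmaAt j k) := opNorm_mul_le _ _
      _ ≤ opNorm (sigmaAt j k) * opNorm A * opNorm (sigmaAt j k) := by
          apply mul_le_mul_of_nonneg_right (opNorm_mul_le _ _) (norm_nonneg _)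
      _ = opNorm A := by rw [sigmaAt, opNorm_pauliString]; ring
  have h2 : opNorm ((4:ℂ)⁻¹ • ∑ k : Fin 4, sigmaAt j k * A * sigmaAt j k)
      = (4:ℝ)⁻¹ * opNorm (∑ k : Fin 4, sigmaAt j k * A * sigmaAt j k) := by
    rw [opNorm, opNorm, _root_.map_smul,
      norm_smul ((4:ℂ)⁻¹) (Matrix.toEuclideanCLM (𝕜:=ℂ) (∑ k : Fin 4, sigmaAt j k * A * sigmaAt j k))]
    norm_num
  rw [h2]
  have h3 : opNorm (∑ k : Fin 4, sigmaAt j k * A * sigmaAt j k)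
      ≤ ∑ k : Fin 4, opNorm (sigmaAt j k * A * sigmaAt j k) := by
    rw [opNorm, _root_.map_sum]
    exact norm_sum_le _ _
  have h4 : (∑ k : Fin 4, opNorm (sigmaAt j k * A * sigmaAt j k)) ≤ 4 * opNorm A := by
    calc (∑ k : Fin 4, opNorm (sigmaAt j k * A * sigmaAt j k))
        ≤ ∑ _k : Fin 4, opNorm A := Finset.sum_le_sum fun k _ => h1 k
      _ = 4 * opNorm A := by simp [Finset.sum_const, mul_comm]
  calc (4:ℝ)⁻¹ * opNorm (∑ k : Fin 4, sigmaAt j k * A * sigmaAt j k)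
      ≤ (4:ℝ)⁻¹ * (4 * opNorm A) := by
        apply mul_le_mul_of_nonneg_left (le_trans h3 h4) (by norm_num)
    _ = opNorm A := by ring

lemma dOp_add_eProj (j : Fin n) (A : QOp n) :
    dOp j A + (∑ s ∈ Finset.univ.filter (fun s : Fin n → Fin 4 => s j = 0),
      coef A s • pauliString s) = A := by
  rw [dOp]
  conv_rhs => rw [← pauliString_expand A]
  rw [← Finset.sum_filter_add_sum_filter_not Finset.univ
    (fun s : Fin n → Fin 4 => s j ≠ 0) (fun s => coef A s • pauliString s)]
  congr 1
  apply Finset.sum_congr _ fun _ _ => rfl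
  congr 1
  ext s
  simp

lemma opNorm_dOp_le (j : Fin n) (A : QOp n) : opNorm (dOp j A) ≤ 2 * opNorm A := by
  have h := dOp_add_eProj j A
  have : dOp j A = A - (∑ s ∈ Finset.univ.filter (fun s : Fin n → Fin 4 => s j = 0),
      coef A s • pauliString s) := eq_sub_of_add_eq h
  rw [this]
  calc opNorm (A - _) ≤ opNorm A + opNorm (∑ s ∈ Finset.univ.filter
        (fun s : Fin n → Fin 4 => s j = 0), coef A s • pauliString s) := by
        rw [opNorm, opNorm, opNorm, map_sub]
        exact norm_sub_le _ _
    _ ≤ opNorm A + opNorm A := by linarith [opNorm_eProj_le j A]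
    _ = 2 * opNorm A := by ring

lemma coef_dOp (j : Fin n) (A : QOp n) (s : Fin n → Fin 4) :
    coef (dOp j A) s = if s j ≠ 0 then coef A s else 0 := by
  rw [dOp, coef_pauliSum]
  simp [Finset.mem_filter]

lemma traceAbsPow_two_dOp (j : Fin n) (A : QOp n) :
    traceAbsPow 2 (dOp j A) = ∑ s : Fin n → Fin 4,
      (if s j ≠ 0 then ‖coef A s‖^2 else 0) := by
  rw [traceAbsPow_two_eq]
  refine Finset.sum_congr rfl fun s _ => ?_
  rw [coef_dOp]
  split <;> simp

lemma sum_traceAbsPow_two_dOp (A : QOp n) :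
    ∑ j, traceAbsPow 2 (dOp j A)
      = ∑ s : Fin n → Fin 4, ((psupp s).card : ℝ) * ‖coef A s‖^2 := by
  simp only [traceAbsPow_two_dOp]
  rw [Finset.sum_comm]
  refine Finset.sum_congr rfl fun s _ => ?_
  rw [← Finset.sum_filter]
  rw [Finset.sum_const]
  rw [show Finset.univ.filter (fun j => s j ≠ 0) = psupp s from rfl]
  simp [nsmul_eq_mul]

lemma coef_sub (A B : QOp n) (s : Fin n → Fin 4) :
    coef (A - B) s = coef A s - coef B s := by
  simp [coef, ntrace, Matrix.mul_sub, Matrix.trace_sub]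
  ring

lemma pauli_zero_eq : pauli 0 = 1 := by
  ext a b; fin_cases a <;> fin_cases b <;> simp [pauli, Matrix.one_apply]

lemma pauliString_zero : pauliString (0 : Fin n → Fin 4) = 1 := by
  ext x y
  simp only [pauliString, Matrix.of_apply, Pi.zero_apply, pauli_zero_eq]
  by_cases h : x = y
  · subst h; simp [Matrix.one_apply]
  · rw [Matrix.one_apply_ne h]
    have : ∃ j, x j ≠ y j := by
      by_contra hc; push_neg at hc; exact h (funext hc)
    obtain ⟨j, hj⟩ := this
    refine Finset.prod_eq_zero (Finset.mem_univ j) ?_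
    simp [Matrix.one_apply, hj]

lemma coef_zero_eq_ntrace (A : QOp n) : coef A 0 = ntrace A := by
  rw [coef, pauliString_zero, one_mul]

lemma ntrace_smul' (c : ℂ) (A : QOp n) : ntrace (c • A) = c * ntrace A := by
  simp [ntrace, Matrix.trace_smul]; ring

lemma coef_smul_one (c : ℂ) (s : Fin n → Fin 4) :
    coef (c • (1 : QOp n)) s = if s = 0 then c else 0 := by
  rw [coef, Matrix.mul_smul, mul_one, ntrace_smul']
  have h : ntrace (pauliString s) = if s = 0 then 1 else 0 := by
    have h2 := ntrace_pauliString_mul s (0 : Fin n → Fin 4)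
    rwa [pauliString_zero, mul_one] at h2
  rw [h]
  split <;> simp

lemma var_eq (A : QOp n) :
    var A = ∑ s ∈ Finset.univ.filter (fun s : Fin n → Fin 4 => s ≠ 0), ‖coef A s‖^2 := by
  rw [var, traceAbsPow_two_eq, Finset.sum_filter]
  refine Finset.sum_congr rfl fun s _ => ?_
  rw [coef_sub, coef_smul_one]
  by_cases h : s = 0
  · subst h
    simp [coef_zero_eq_ntrace]
  · simp [h]

lemma psupp_zero_card {s : Fin n → Fin 4} (h : s = 0) : (psupp s).card = 0 := by
  subst h
  simp [psupp]

lemma psupp_card_pos {s : Fin n → Fin 4} (h : s ≠ 0) : 1 ≤ (psupp s).card := by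
  have : ∃ j, s j ≠ 0 := by
    by_contra hc; push_neg at hc; exact h (funext fun j => hc j)
  obtain ⟨j, hj⟩ := this
  have : j ∈ psupp s := by simp [psupp, hj]
  exact Finset.card_pos.mpr ⟨j, this⟩

lemma psupp_card_le (s : Fin n → Fin 4) : (psupp s).card ≤ n := by
  calc (psupp s).card ≤ Finset.univ.card := Finset.card_le_card (Finset.subset_univ _)
    _ = n := by simp

lemma var_dyadic (A : QOp n) : var A = ∑ l ∈ Finset.range n, wApprox (2^l) A := by
  classical
  rw [var_eq]
  have key : ∀ s ∈ Finset.univ.filter (fun s : Fin n → Fin 4 => s ≠ 0),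
      ‖coef A s‖^2 = ∑ l ∈ Finset.range n,
        (if 2^l ≤ (psupp s).card ∧ (psupp s).card < 2 * 2^l then ‖coef A s‖^2 else 0) := by
    intro s hs
    rw [Finset.mem_filter] at hs
    have h1 : 1 ≤ (psupp s).card := psupp_card_pos hs.2
    have hn : (psupp s).card ≤ n := psupp_card_le s
    set c := (psupp s).card with hc
    set l0 := Nat.log 2 c with hl0def
    have hl0 : 2^l0 ≤ c := Nat.pow_log_le_self 2 (by omega)
    have hl0' : c < 2^(l0+1) := Nat.lt_pow_succ_log_self (by norm_num) c
    have hl0n : l0 < n := by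
      have h2 : l0 < 2^l0 := Nat.lt_two_pow_self (n := l0)
      omega
    rw [Finset.sum_eq_single l0]
    · rw [if_pos ⟨hl0, by rw [pow_succ] at hl0'; omega⟩]
    · intro l _ hne
      rw [if_neg]
      rintro ⟨ha, hb⟩
      apply hne
      have : Nat.log 2 c = l := Nat.log_eq_of_pow_le_of_lt_pow ha (by rw [pow_succ]; omega)
      omega
    · intro habs; exact absurd (Finset.mem_range.mpr hl0n) habs
  rw [Finset.sum_congr rfl key, Finset.sum_comm]
  refine Finset.sum_congr rfl fun l _ => ?_
  rw [wApprox, ← Finset.sum_filter, Finset.filter_filter]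
  apply Finset.sum_congr _ fun _ _ => rfl
  ext s
  simp only [Finset.mem_filter, Finset.mem_univ, true_and]
  constructor
  · rintro ⟨_, h⟩; exact h
  · rintro ⟨ha, hb⟩
    refine ⟨?_, ha, hb⟩
    intro h0
    rw [psupp_zero_card h0] at ha
    have : 0 < 2^l := Nat.pow_pos (by norm_num)
    omega

lemma var_le_S (A : QOp n) :
    var A ≤ ∑ s : Fin n → Fin 4, ((psupp s).card : ℝ) * ‖coef A s‖^2 := by
  rw [var_eq]
  calc ∑ s ∈ Finset.univ.filter (fun s : Fin n → Fin 4 => s ≠ 0), ‖coef A s‖^2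
      ≤ ∑ s ∈ Finset.univ.filter (fun s : Fin n → Fin 4 => s ≠ 0),
          ((psupp s).card : ℝ) * ‖coef A s‖^2 := by
        apply Finset.sum_le_sum
        intro s hs
        rw [Finset.mem_filter] at hs
        have h1 : (1:ℝ) ≤ ((psupp s).card : ℝ) := by exact_mod_cast psupp_card_pos hs.2
        nlinarith [sq_nonneg ‖coef A s‖]
    _ ≤ ∑ s : Fin n → Fin 4, ((psupp s).card : ℝ) * ‖coef A s‖^2 := by
        apply Finset.sum_le_sum_of_subset_of_nonneg (Finset.subset_univ _)
        intro s _ _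
        positivity

lemma S_le (A : QOp n) (hA : opNorm A ≤ 1) :
    ∑ s : Fin n → Fin 4, ((psupp s).card : ℝ) * ‖coef A s‖^2 ≤ 2 * infPTotal 1 A := by
  rw [← sum_traceAbsPow_two_dOp, infPTotal, Finset.mul_sum]
  apply Finset.sum_le_sum
  intro j _
  have h1 : traceAbsPow 2 (dOp j A) ≤ opNorm (dOp j A) * traceAbsPow 1 (dOp j A) :=
    traceAbsPow_two_le _
  have h2 : opNorm (dOp j A) ≤ 2 := le_trans (opNorm_dOp_le j A) (by linarith)
  have h3 : 0 ≤ traceAbsPow 1 (dOp j A) := traceAbsPow_nonneg _ _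
  calc traceAbsPow 2 (dOp j A) ≤ opNorm (dOp j A) * traceAbsPow 1 (dOp j A) := h1
    _ ≤ 2 * traceAbsPow 1 (dOp j A) := mul_le_mul_of_nonneg_right h2 h3
    _ = 2 * infP 1 j A := rfl

lemma pow2W_le (A : QOp n) (l : ℕ) :
    (2^l : ℝ) * wApprox (2^l) A ≤
      ∑ s : Fin n → Fin 4, ((psupp s).card : ℝ) * ‖coef A s‖^2 := by
  rw [wApprox, Finset.mul_sum]
  calc ∑ s ∈ Finset.univ.filter
        (fun s : Fin n → Fin 4 => 2^l ≤ (psupp s).card ∧ (psupp s).card < 2 * 2^l),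
        (2^l : ℝ) * ‖coef A s‖^2
      ≤ ∑ s ∈ Finset.univ.filter
        (fun s : Fin n → Fin 4 => 2^l ≤ (psupp s).card ∧ (psupp s).card < 2 * 2^l),
        ((psupp s).card : ℝ) * ‖coef A s‖^2 := by
        apply Finset.sum_le_sum
        intro s hs
        rw [Finset.mem_filter] at hs
        have : (2^l : ℝ) ≤ ((psupp s).card : ℝ) := by exact_mod_cast hs.2.1
        nlinarith [sq_nonneg ‖coef A s‖]
    _ ≤ ∑ s : Fin n → Fin 4, ((psupp s).card : ℝ) * ‖coef A s‖^2 := by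
        apply Finset.sum_le_sum_of_subset_of_nonneg (Finset.subset_univ _)
        intro s _ _
        positivity

lemma wApprox_nonneg (d : ℕ) (A : QOp n) : 0 ≤ wApprox d A := by
  apply Finset.sum_nonneg; intro s _; positivity

lemma wApprox_zero_of_big (A : QOp n) {l : ℕ} (h : n < 2^l) : wApprox (2^l) A = 0 := by
  rw [wApprox]
  apply Finset.sum_eq_zero
  intro s hs
  rw [Finset.mem_filter] at hs
  have := psupp_card_le s
  omega

end AuxProofs

section Endgame
lemma two_mul_le_twopow (m : ℕ) : 2*(m+5) ≤ 2^(m+4) := by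
  induction m with
  | zero => norm_num
  | succ m ih =>
    have h2 : 2 ≤ 2^(m+4) := by
      calc 2 = 2^1 := by norm_num
        _ ≤ 2^(m+4) := Nat.pow_le_pow_right (by norm_num) (by omega)
    rw [pow_succ]
    omega

lemma endgame (V I : ℝ) (W : ℕ → ℝ) (N : ℕ) (hW0 : ∀ l, 0 ≤ W l)
    (hVsum : V = ∑ l ∈ Finset.range N, W l)
    (hWle : ∀ l, (2^l:ℝ) * W l ≤ 2*I)
    (hV2I : V ≤ 2*I) :
    V ≤ 4 * ∑ l ∈ Finset.range N, {m : ℕ | V^2/(16*I) ≤ W m}.indicator W l := by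
  classical
  have hind : ∀ l, {m : ℕ | V^2/(16*I) ≤ W m}.indicator W l
      = if V^2/(16*I) ≤ W l then W l else 0 := by
    intro l
    rw [Set.indicator_apply]
    simp [Set.mem_setOf_eq]
  have hRHS0 : 0 ≤ ∑ l ∈ Finset.range N, {m : ℕ | V^2/(16*I) ≤ W m}.indicator W l := by
    apply Finset.sum_nonneg
    intro l _
    rw [hind]
    split
    · exact hW0 l
    · exact le_refl 0
  by_cases hV : V ≤ 0
  · linarith
  push_neg at hV
  have hI : 0 < I := by linarith
  set T : ℝ := V^2/(16*I) with hT
  have hT0 : 0 ≤ T := by positivity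
  set M : ℝ := 16*I/V with hM
  have hM8 : 8 ≤ M := by
    rw [hM, le_div_iff₀ hV]
    linarith
  have hM0 : 0 < M := by linarith
  set k : ℕ := Nat.log 2 ⌊M⌋₊ with hk
  set K : ℕ := k + 1 with hK
  have hfloor : 8 ≤ ⌊M⌋₊ := by
    have := Nat.le_floor (α := ℝ) (n := 8) (by exact_mod_cast hM8)
    exact_mod_cast this
  have hpowk : (2:ℝ)^k ≤ M := by
    have h1 : 2^k ≤ ⌊M⌋₊ := Nat.pow_log_le_self 2 (by omega)
    calc (2:ℝ)^k = ((2^k : ℕ) : ℝ) := by push_cast; ring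
      _ ≤ (⌊M⌋₊ : ℝ) := by exact_mod_cast h1
      _ ≤ M := Nat.floor_le (le_of_lt hM0)
  have hM2K : M ≤ (2:ℝ)^K := by
    have h1 : ⌊M⌋₊ < 2^K := Nat.lt_pow_succ_log_self (by norm_num) _
    have h2 : M < (⌊M⌋₊ : ℝ) + 1 := Nat.lt_floor_add_one M
    have h3 : (⌊M⌋₊ : ℝ) + 1 ≤ (2:ℝ)^K := by
      have : ⌊M⌋₊ + 1 ≤ 2^K := h1
      exact_mod_cast this
    linarith
  have hKM : 2*(K:ℝ) ≤ M := by
    by_cases hk4 : k ≤ 3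
    · have : (K:ℝ) ≤ 4 := by
        have : K ≤ 4 := by omega
        exact_mod_cast this
      linarith
    · push_neg at hk4
      have h5 : 2*(k+1) ≤ 2^k := by
        have := two_mul_le_twopow (k-4)
        have hke : k - 4 + 5 = k + 1 := by omega
        have hke2 : k - 4 + 4 = k := by omega
        rw [hke, hke2] at this
        exact this
      calc 2*(K:ℝ) = ((2*(k+1) : ℕ) : ℝ) := by rw [hK]; push_cast; ring
        _ ≤ ((2^k : ℕ) : ℝ) := by exact_mod_cast h5
        _ = (2:ℝ)^k := by push_cast; ring
        _ ≤ M := hpowk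
  -- split the sum
  have hsplit := Finset.sum_filter_add_sum_filter_not (Finset.range N)
    (fun l => T ≤ W l) W
  set G := (Finset.range N).filter (fun l => T ≤ W l) with hG
  set B := (Finset.range N).filter (fun l => ¬ T ≤ W l) with hB
  -- bad sum bound
  have hBsplit := Finset.sum_filter_add_sum_filter_not B (fun l => l < K) W
  have hB1 : ∑ l ∈ B.filter (fun l => l < K), W l ≤ (K:ℝ) * T := by
    calc ∑ l ∈ B.filter (fun l => l < K), W l
        ≤ ∑ _l ∈ B.filter (fun l => l < K), T := by
          apply Finset.sum_le_sum
          intro l hl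
          rw [hB] at hl
          simp only [Finset.mem_filter] at hl
          linarith [hl.1.2 |> fun (h : ¬ T ≤ W l) => (not_le.mp h).le]
      _ = (B.filter (fun l => l < K)).card * T := by rw [Finset.sum_const, nsmul_eq_mul]
      _ ≤ (K:ℝ) * T := by
          apply mul_le_mul_of_nonneg_right _ hT0
          have hsub : B.filter (fun l => l < K) ⊆ Finset.range K := by
            intro l hl
            simp only [Finset.mem_filter] at hl
            exact Finset.mem_range.mpr hl.2
          have := Finset.card_le_card hsub
          rw [Finset.card_range] at this
          exact_mod_cast this
  have hKT : (K:ℝ) * T ≤ V/2 := by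
    rw [hT, mul_div_assoc']
    rw [div_le_div_iff₀ (by linarith) (by norm_num : (0:ℝ) < 2)]
    have hKMv : 2*(K:ℝ)*V ≤ 16*I := by
      have := hKM
      rw [hM, le_div_iff₀ hV] at this
      linarith
    nlinarith [hV, sq_nonneg V]
  have hB2 : ∑ l ∈ B.filter (fun l => ¬ l < K), W l ≤ V/4 := by
    have hWle' : ∀ l, W l ≤ 2*I/(2^l : ℝ) := by
      intro l
      rw [le_div_iff₀ (by positivity)]
      calc W l * (2^l:ℝ) = (2^l:ℝ) * W l := by ring
        _ ≤ 2*I := hWle l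
    have hsub : B.filter (fun l => ¬ l < K) ⊆ Finset.Ico K N := by
      intro l hl
      simp only [hB, Finset.mem_filter, Finset.mem_range] at hl
      exact Finset.mem_Ico.mpr ⟨by omega, hl.1.1⟩
    calc ∑ l ∈ B.filter (fun l => ¬ l < K), W l
        ≤ ∑ l ∈ Finset.Ico K N, 2*I/(2^l:ℝ) := by
          apply le_trans (Finset.sum_le_sum fun l _ => hWle' l)
          apply Finset.sum_le_sum_of_subset_of_nonneg hsub
          intro l _ _
          positivity
      _ = 2*I * ∑ l ∈ Finset.Ico K N, ((1/2:ℝ))^l := by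
          rw [Finset.mul_sum]
          refine Finset.sum_congr rfl fun l _ => ?_
          rw [div_pow, one_pow]
          ring
      _ ≤ 2*I * (2 * (1/2:ℝ)^K) := by
          apply mul_le_mul_of_nonneg_left _ (by linarith)
          rw [Finset.sum_Ico_eq_sum_range]
          have : ∀ i, (1/2:ℝ)^(K+i) = (1/2:ℝ)^K * (1/2:ℝ)^i := fun i => pow_add _ _ _
          simp only [this, ← Finset.mul_sum]
          calc (1/2:ℝ)^K * ∑ i ∈ Finset.range (N-K), (1/2:ℝ)^i
              ≤ (1/2:ℝ)^K * 2 := by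
                apply mul_le_mul_of_nonneg_left (sum_geometric_two_le _) (by positivity)
            _ = 2 * (1/2:ℝ)^K := by ring
      _ ≤ V/4 := by
          have h2K : (2:ℝ)^K ≠ 0 := by positivity
          have hstep : 2*I*(2*(1/2:ℝ)^K) = 4*I/(2:ℝ)^K := by
            rw [div_pow, one_pow]
            field_simp
            ring
          rw [hstep]
          have : 4*I/(2:ℝ)^K ≤ 4*I/M := by
            apply div_le_div_of_nonneg_left (by linarith) hM0 hM2K
          calc 4*I/(2:ℝ)^K ≤ 4*I/M := this
            _ = V/4 := by
              rw [hM]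
              field_simp
              ring
  have hGB : V = ∑ l ∈ G, W l + ∑ l ∈ B, W l := by rw [hVsum, ← hsplit]
  have hBsum : ∑ l ∈ B, W l ≤ V/2 + V/4 := by
    rw [← hBsplit]
    have := le_trans hB1 hKT
    linarith
  have hGsum : V/4 ≤ ∑ l ∈ G, W l := by linarith
  have hGeq : ∑ l ∈ G, W l = ∑ l ∈ Finset.range N,
      {m : ℕ | V^2/(16*I) ≤ W m}.indicator W l := by
    rw [hG, Finset.sum_filter]
    refine Finset.sum_congr rfl fun l _ => ?_
    rw [hind]
  linarith [hGeq ▸ hGsum]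

end Endgame

/-- **Lemma 3.7**: `Var[A] ≤ 4 ∑_{d ∈ D_good} W_{≈d}[A]`, where
`D_good = {d = 2ˡ : W_{≈d}[A] ≥ Var[A]²/(16 Inf¹[A])}`. -/
theorem var_le_good_chunks (n : ℕ) (A : QOp n) (hA : opNorm A ≤ 1) :
    var A ≤ 4 * ∑' l : ℕ,
      {m : ℕ | var A ^ 2 / (16 * infPTotal 1 A) ≤ wApprox (2 ^ m) A}.indicator
        (fun m => wApprox (2 ^ m) A) l := by
  have htsum : (∑' l : ℕ,
      {m : ℕ | var A ^ 2 / (16 * infPTotal 1 A) ≤ wApprox (2 ^ m) A}.indicator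
        (fun m => wApprox (2 ^ m) A) l)
      = ∑ l ∈ Finset.range n,
      {m : ℕ | var A ^ 2 / (16 * infPTotal 1 A) ≤ wApprox (2 ^ m) A}.indicator
        (fun m => wApprox (2 ^ m) A) l := by
    apply tsum_eq_sum
    intro l hl
    rw [Finset.mem_range, not_lt] at hl
    have hzero : wApprox (2^l) A = 0 := wApprox_zero_of_big A (by
      calc n < 2^n := Nat.lt_two_pow_self (n := n)
        _ ≤ 2^l := Nat.pow_le_pow_right (by norm_num) hl)
    by_cases hm : l ∈ {m : ℕ | var A ^ 2 / (16*infPTotal 1 A) ≤ wApprox (2^m) A}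
    · rw [Set.indicator_of_mem hm]; exact hzero
    · rw [Set.indicator_of_notMem hm]
  rw [htsum]
  have hS := S_le A hA
  exact endgame (var A) (infPTotal 1 A) (fun m => wApprox (2^m) A) n
    (fun l => wApprox_nonneg _ A)
    (var_dyadic A)
    (fun l => le_trans (pow2W_le A l) hS)
    (le_trans (var_le_S A) hS)


end
end

section
/- Let A ∈ M_2(ℂ)^{⊗n}, let B_d = (T_{1−1/(3d)} − T_{1−1/(2d)})(A) denote the soft chunk of A of degree d, and define G_good = {d = 2^l, l a nonnegative integer : d·W_{≈d}[A] ≥ (1/20)·Inf[B_d]}. Then Var[A] ≤ 2·Σ_{d ∈ G_good} W_{≈d}[A]. -/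
open scoped BigOperators
open Matrix

noncomputable section

namespace L310
open Finset

lemma pauli_trace_pair (k k' : Fin 4) :
    ∑ a : Fin 2, ∑ b : Fin 2, pauli k a b * pauli k' b a = if k = k' then 2 else 0 := by
  fin_cases k <;> fin_cases k' <;>
    simp [pauli, Fin.sum_univ_succ] <;> norm_num [Complex.ext_iff]

lemma pauli_resolution (a b c d : Fin 2) :
    ∑ k : Fin 4, pauli k a b * (starRingEnd ℂ) (pauli k c d) =
      if a = c ∧ b = d then 2 else 0 := by
  fin_cases a <;> fin_cases b <;> fin_cases c <;> fin_cases d <;>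
    simp [pauli, Fin.sum_univ_succ] <;> norm_num [Complex.ext_iff]

end L310
namespace L310
open Finset

variable {n : ℕ}

lemma sum_pi_prod {ι : Type*} [Fintype ι] [DecidableEq ι] {κ : Type*} [Fintype κ]
    (F : ι → κ → ℂ) :
    ∑ f : ι → κ, ∏ j, F j (f j) = ∏ j, ∑ k, F j k := by
  rw [Finset.prod_univ_sum]
  simp [Fintype.piFinset_univ]

lemma trace_pauliString_mul (s t : Fin n → Fin 4) :
    (pauliString s * pauliString t).trace = ∏ j, (if s j = t j then (2:ℂ) else 0) := by
  have h1 : (pauliString s * pauliString t).trace =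
      ∑ x : QIdx n, ∑ y : QIdx n, ∏ j, (pauli (s j) (x j) (y j) * pauli (t j) (y j) (x j)) := by
    simp [Matrix.trace, Matrix.diag, Matrix.mul_apply, pauliString, Finset.prod_mul_distrib]
  rw [h1]
  have h2 : ∀ x : QIdx n, ∑ y : QIdx n, ∏ j, (pauli (s j) (x j) (y j) * pauli (t j) (y j) (x j))
      = ∏ j, ∑ b : Fin 2, pauli (s j) (x j) b * pauli (t j) b (x j) := fun x =>
    sum_pi_prod (fun j b => pauli (s j) (x j) b * pauli (t j) b (x j))
  rw [Finset.sum_congr rfl fun x _ => h2 x,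
    sum_pi_prod (fun j a => ∑ b : Fin 2, pauli (s j) a b * pauli (t j) b a)]
  exact Finset.prod_congr rfl fun j _ => pauli_trace_pair (s j) (t j)

lemma coef_pauliString (t s : Fin n → Fin 4) :
    coef (pauliString t) s = if s = t then 1 else 0 := by
  rw [coef, ntrace, trace_pauliString_mul]
  by_cases h : s = t
  · subst h
    simp only [if_pos rfl, eq_self_iff_true, if_true, Finset.prod_const, Finset.card_univ,
      Fintype.card_fin]
    rw [inv_mul_eq_one₀ (by norm_num : ((2:ℂ)^n) ≠ 0)]
  · obtain ⟨j, hj⟩ : ∃ j, s j ≠ t j := by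
      by_contra hc
      push_neg at hc
      exact h (funext hc)
    rw [Finset.prod_eq_zero (Finset.mem_univ j) (by simp [hj])]
    simp [h]

lemma string_resolution (x y x' y' : QIdx n) :
    ∑ s : Fin n → Fin 4, pauliString s x y * (starRingEnd ℂ) (pauliString s x' y') =
      if x = x' ∧ y = y' then (2:ℂ)^n else 0 := by
  have h1 : ∀ s : Fin n → Fin 4, pauliString s x y * (starRingEnd ℂ) (pauliString s x' y') =
      ∏ j, (pauli (s j) (x j) (y j) * (starRingEnd ℂ) (pauli (s j) (x' j) (y' j))) := by
    intro s
    simp [pauliString, map_prod, Finset.prod_mul_distrib]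
  rw [Finset.sum_congr rfl fun s _ => h1 s,
    sum_pi_prod (fun j k => pauli k (x j) (y j) * (starRingEnd ℂ) (pauli k (x' j) (y' j)))]
  rw [Finset.prod_congr rfl fun j _ => pauli_resolution (x j) (y j) (x' j) (y' j)]
  by_cases h : x = x' ∧ y = y'
  · simp only [h.1, h.2, and_self, if_true, Finset.prod_const, Finset.card_univ,
      Fintype.card_fin, if_pos rfl]
  · rw [if_neg h]
    obtain ⟨j, hj⟩ : ∃ j, ¬(x j = x' j ∧ y j = y' j) := by
      by_contra hc
      push_neg at hc
      exact h ⟨funext fun j => (hc j).1, funext fun j => (hc j).2⟩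
    exact Finset.prod_eq_zero (Finset.mem_univ j) (by simp [hj])

end L310
namespace L310
open Finset

variable {n : ℕ}

lemma sum_eigen_eq_trace (B : QOp n) (hB : B.IsHermitian) :
    (∑ i, (hB.eigenvalues i : ℂ)) = B.trace := by
  rw [hB.trace_eq_sum_eigenvalues]
  rfl

lemma conj_inv_two_pow : (starRingEnd ℂ) ((2^n : ℂ)⁻¹) = (2^n : ℂ)⁻¹ := by
  rw [map_inv₀, map_pow, Complex.conj_ofNat]

lemma sum_coef_mul_conj (A : QOp n) :
    ∑ s : Fin n → Fin 4, coef A s * (starRingEnd ℂ) (coef A s) =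
      (2^n : ℂ)⁻¹ * ∑ x : QIdx n, ∑ y : QIdx n, A y x * (starRingEnd ℂ) (A y x) := by
  have hc : ∀ s : Fin n → Fin 4, coef A s =
      (2^n : ℂ)⁻¹ * ∑ p : QIdx n × QIdx n, pauliString s p.1 p.2 * A p.2 p.1 := by
    intro s
    rw [coef, ntrace, Fintype.sum_prod_type]
    congr 1
  calc ∑ s : Fin n → Fin 4, coef A s * (starRingEnd ℂ) (coef A s)
      = (2^n : ℂ)⁻¹ * (2^n : ℂ)⁻¹ * ∑ s : Fin n → Fin 4, ∑ p : QIdx n × QIdx n,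
          ∑ q : QIdx n × QIdx n, (A p.2 p.1 * (starRingEnd ℂ) (A q.2 q.1)) *
            (pauliString s p.1 p.2 * (starRingEnd ℂ) (pauliString s q.1 q.2)) := by
        rw [Finset.mul_sum]
        refine Finset.sum_congr rfl fun s _ => ?_
        rw [hc s, _root_.map_mul, map_sum, conj_inv_two_pow, mul_mul_mul_comm]
        congr 1
        rw [Finset.sum_mul_sum]
        refine Finset.sum_congr rfl fun p _ => Finset.sum_congr rfl fun q _ => ?_
        rw [_root_.map_mul]
        ring
    _ = (2^n : ℂ)⁻¹ * (2^n : ℂ)⁻¹ * ∑ p : QIdx n × QIdx n,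
          ∑ q : QIdx n × QIdx n, (A p.2 p.1 * (starRingEnd ℂ) (A q.2 q.1)) *
            ∑ s : Fin n → Fin 4, (pauliString s p.1 p.2 * (starRingEnd ℂ) (pauliString s q.1 q.2)) := by
        rw [Finset.sum_comm]
        congr 1
        refine Finset.sum_congr rfl fun p _ => ?_
        rw [Finset.sum_comm]
        refine Finset.sum_congr rfl fun q _ => ?_
        rw [Finset.mul_sum]
    _ = (2^n : ℂ)⁻¹ * (2^n : ℂ)⁻¹ * ∑ p : QIdx n × QIdx n,
          (A p.2 p.1 * (starRingEnd ℂ) (A p.2 p.1)) * (2:ℂ)^n := by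
        congr 1
        refine Finset.sum_congr rfl fun p _ => ?_
        have key : ∀ q : QIdx n × QIdx n, (A p.2 p.1 * (starRingEnd ℂ) (A q.2 q.1)) *
            (∑ s : Fin n → Fin 4, (pauliString s p.1 p.2 * (starRingEnd ℂ) (pauliString s q.1 q.2)))
            = if q = p then (A p.2 p.1 * (starRingEnd ℂ) (A p.2 p.1)) * (2:ℂ)^n else 0 := by
          intro q
          rw [string_resolution]
          by_cases h : q = p
          · subst h; simp
          · rw [if_neg h, if_neg, mul_zero]
            intro ⟨h1, h2⟩
            exact h (Prod.ext h1.symm h2.symm)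
        rw [Finset.sum_congr rfl fun q _ => key q, Finset.sum_ite_eq' Finset.univ p]
        simp
    _ = (2^n : ℂ)⁻¹ * ∑ x : QIdx n, ∑ y : QIdx n, A y x * (starRingEnd ℂ) (A y x) := by
        rw [← Finset.sum_mul, Fintype.sum_prod_type]
        have h2 : ((2:ℂ)^n) ≠ 0 := by norm_num
        field_simp

lemma parseval (A : QOp n) : traceAbsPow 2 A = ∑ s : Fin n → Fin 4, ‖coef A s‖ ^ 2 := by
  apply Complex.ofReal_injective
  have e1 : (↑(traceAbsPow 2 A) : ℂ) = (2^n : ℂ)⁻¹ * (Aᴴ * A).trace := by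
    rw [traceAbsPow]
    have : ∀ i, ((Matrix.isHermitian_conjTranspose_mul_self A).eigenvalues i) ^ ((2:ℝ) / 2)
        = (Matrix.isHermitian_conjTranspose_mul_self A).eigenvalues i := by
      intro i
      norm_num
    rw [Finset.sum_congr rfl fun i _ => this i,
      ← sum_eigen_eq_trace _ (Matrix.isHermitian_conjTranspose_mul_self A)]
    push_cast
    ring
  rw [e1]
  have e2 : (↑(∑ s : Fin n → Fin 4, ‖coef A s‖ ^ 2) : ℂ)
      = ∑ s : Fin n → Fin 4, coef A s * (starRingEnd ℂ) (coef A s) := by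
    push_cast
    refine Finset.sum_congr rfl fun s _ => ?_
    rw [Complex.mul_conj, Complex.normSq_eq_norm_sq]
    push_cast
    ring
  rw [e2, sum_coef_mul_conj]
  congr 1
  simp only [Matrix.trace, Matrix.diag_apply, Matrix.mul_apply, Matrix.conjTranspose_apply,
    Complex.star_def]
  exact Finset.sum_congr rfl fun x _ => Finset.sum_congr rfl fun y _ => mul_comm _ _

end L310
namespace L310
open Finset

variable {n : ℕ}

lemma coef_sub (A B : QOp n) (s : Fin n → Fin 4) :
    coef (A - B) s = coef A s - coef B s := by
  simp only [coef, ntrace, Matrix.mul_sub, Matrix.trace_sub]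
  ring

lemma coef_smul (c : ℂ) (A : QOp n) (s : Fin n → Fin 4) :
    coef (c • A) s = c * coef A s := by
  simp only [coef, ntrace, Matrix.mul_smul, Matrix.trace_smul, smul_eq_mul]
  ring

lemma coef_finsum {ι : Type*} (t : Finset ι) (f : ι → QOp n) (s : Fin n → Fin 4) :
    coef (∑ i ∈ t, f i) s = ∑ i ∈ t, coef (f i) s := by
  simp only [coef, ntrace, Finset.mul_sum, Matrix.mul_sum, Matrix.trace_sum]

lemma pauliString_zero : pauliString (0 : Fin n → Fin 4) = 1 := by
  ext x y
  simp only [pauliString, Matrix.of_apply, Matrix.one_apply]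
  have h0 : ∀ a b : Fin 2, pauli 0 a b = if a = b then 1 else 0 := by
    intro a b
    fin_cases a <;> fin_cases b <;> simp [pauli]
  simp only [Pi.zero_apply, h0]
  by_cases h : x = y
  · subst h; simp
  · rw [if_neg h]
    obtain ⟨j, hj⟩ : ∃ j, x j ≠ y j := by
      by_contra hc; push_neg at hc; exact h (funext hc)
    exact Finset.prod_eq_zero (Finset.mem_univ j) (by simp [hj])

lemma coef_one (s : Fin n → Fin 4) : coef (1 : QOp n) s = if s = 0 then 1 else 0 := by
  rw [← pauliString_zero, coef_pauliString]

lemma coef_zero_eq_ntrace (A : QOp n) : coef A (0 : Fin n → Fin 4) = ntrace A := by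
  rw [coef, pauliString_zero, Matrix.one_mul]

/-- coefficients of a general Pauli-series. -/
lemma coef_series (c : (Fin n → Fin 4) → ℂ) (P : (Fin n → Fin 4) → Prop) [DecidablePred P]
    (s : Fin n → Fin 4) :
    coef (∑ t ∈ Finset.univ.filter P, c t • pauliString t) s
      = if P s then c s else 0 := by
  rw [coef_finsum]
  have h1 : ∀ t, coef (c t • pauliString t) s = if s = t then c t else 0 := by
    intro t
    rw [coef_smul, coef_pauliString]
    by_cases h : s = t <;> simp [h]
  rw [Finset.sum_congr rfl fun t _ => h1 t, Finset.sum_filter]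
  rw [Finset.sum_congr rfl (g := fun t => if t = s then (if P s then c s else 0) else 0)
    (fun t _ => by
      by_cases h : t = s
      · subst h; by_cases hP : P t <;> simp [hP]
      · have : ¬ (s = t) := fun hh => h hh.symm
        simp [h, this])]
  rw [Finset.sum_ite_eq' Finset.univ s]
  simp

lemma coef_noiseOp (δ : ℝ) (A : QOp n) (s : Fin n → Fin 4) :
    coef (noiseOp δ A) s = (δ:ℂ) ^ (psupp s).card * coef A s := by
  have : noiseOp δ A = ∑ t ∈ Finset.univ.filter (fun _ : Fin n → Fin 4 => True),
      (((δ:ℂ) ^ (psupp t).card * coef A t) • pauliString t) := by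
    rw [noiseOp]
    simp
  rw [this, coef_series]
  simp

lemma coef_dOp (j : Fin n) (A : QOp n) (s : Fin n → Fin 4) :
    coef (dOp j A) s = if s j ≠ 0 then coef A s else 0 := by
  rw [dOp, coef_series]

lemma coef_softChunk (d : ℕ) (A : QOp n) (s : Fin n → Fin 4) :
    coef (softChunk d A) s =
      ((((1 - 1/(3*(d:ℝ))) ^ (psupp s).card - (1 - 1/(2*(d:ℝ))) ^ (psupp s).card : ℝ)) : ℂ)
        * coef A s := by
  rw [softChunk, coef_sub, coef_noiseOp, coef_noiseOp]
  push_cast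
  ring

lemma norm_coef_softChunk_sq (d : ℕ) (A : QOp n) (s : Fin n → Fin 4) :
    ‖coef (softChunk d A) s‖ ^ 2 =
      ((1 - 1/(3*(d:ℝ))) ^ (psupp s).card - (1 - 1/(2*(d:ℝ))) ^ (psupp s).card) ^ 2
        * ‖coef A s‖ ^ 2 := by
  rw [coef_softChunk, norm_mul, mul_pow, Complex.norm_real, Real.norm_eq_abs, sq_abs]

lemma infPTotal_eq (B : QOp n) :
    infPTotal 2 B = ∑ s : Fin n → Fin 4, ((psupp s).card : ℝ) * ‖coef B s‖ ^ 2 := by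
  rw [infPTotal]
  have h1 : ∀ j, infP 2 j B = ∑ s : Fin n → Fin 4,
      (if s j ≠ 0 then (1:ℝ) else 0) * ‖coef B s‖ ^ 2 := by
    intro j
    rw [infP, parseval]
    refine Finset.sum_congr rfl fun s _ => ?_
    rw [coef_dOp]
    by_cases h : s j ≠ 0 <;> simp [h]
  rw [Finset.sum_congr rfl fun j _ => h1 j, Finset.sum_comm]
  refine Finset.sum_congr rfl fun s _ => ?_
  rw [← Finset.sum_mul]
  congr 1
  rw [Finset.sum_boole]
  simp [psupp]

lemma var_eq (A : QOp n) :
    var A = ∑ s ∈ Finset.univ.filter (fun s : Fin n → Fin 4 => s ≠ 0), ‖coef A s‖ ^ 2 := by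
  rw [var, parseval]
  rw [Finset.sum_filter]
  refine Finset.sum_congr rfl fun s _ => ?_
  rw [coef_sub, coef_smul, coef_one]
  by_cases h : s = 0
  · subst h
    simp [coef_zero_eq_ntrace]
  · simp [h]

end L310
namespace L310
open Finset

lemma geom_le (r : ℝ) (h0 : 0 ≤ r) (h1 : r < 1) (m : ℕ) :
    ∑ i ∈ Finset.range m, r ^ i ≤ (1 - r)⁻¹ := by
  have h2 : (0:ℝ) < 1 - r := by linarith
  have h3 : ∑ i ∈ Finset.range m, r ^ i = (1 - r ^ m) / (1 - r) := by
    rw [geom_sum_eq (ne_of_lt h1)]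
    rw [div_eq_div_iff (by linarith) (by linarith)]
    ring
  rw [h3, div_le_iff₀ h2]
  have h4 : (0:ℝ) ≤ r ^ m := pow_nonneg h0 m
  field_simp
  linarith

lemma pow_sub_pow_le_k (x y : ℝ) (hy : 0 ≤ y) (hxy : y ≤ x) (hx : x ≤ 1) (k : ℕ) :
    x ^ k - y ^ k ≤ k * (x - y) := by
  induction k with
  | zero => simp
  | succ m ih =>
    have hx0 : 0 ≤ x := le_trans hy hxy
    have hym : y ^ m ≤ x ^ m := pow_le_pow_left₀ hy hxy m
    have hxm : x ^ m ≤ 1 := pow_le_one₀ hx0 hx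
    have hy0 : 0 ≤ y ^ m := pow_nonneg hy m
    have e : x ^ (m+1) - y ^ (m+1) = x * (x ^ m - y ^ m) + (x - y) * y ^ m := by ring
    rw [e]
    push_cast
    nlinarith

/-- The key uniform bound `∑_l (k/2^l)(δ1^k - δ2^k)² ≤ 10`. -/
lemma analysis (k L : ℕ) :
    ∑ l ∈ Finset.range L, (k : ℝ) / 2 ^ l *
      ((1 - 1/(3 * 2 ^ l)) ^ k - (1 - 1/(2 * 2 ^ l)) ^ k) ^ 2 ≤ 10 := by
  by_cases hk : k = 0
  · refine le_trans (le_of_eq (Finset.sum_eq_zero fun l _ => ?_)) (by norm_num)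
    rw [hk]
    norm_num
  have hk1 : 1 ≤ k := Nat.one_le_iff_ne_zero.mpr hk
  set f : ℕ → ℝ := fun l => (k : ℝ) / 2 ^ l *
      ((1 - 1/(3 * 2 ^ l)) ^ k - (1 - 1/(2 * 2 ^ l)) ^ k) ^ 2 with hf
  -- basic facts for each l
  have hd1 : ∀ l : ℕ, (1:ℝ) ≤ 2 ^ l := fun l => one_le_pow₀ (by norm_num)
  have hd0 : ∀ l : ℕ, (0:ℝ) < 2 ^ l := fun l => by positivity
  have hδ : ∀ l : ℕ, (0:ℝ) ≤ 1 - 1/(2 * 2 ^ l) ∧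
      (1:ℝ) - 1/(2 * 2 ^ l) ≤ (1:ℝ) - 1/(3 * 2 ^ l) ∧ (1:ℝ) - 1/(3 * 2 ^ l) ≤ (1:ℝ) := by
    intro l
    have h1 := hd1 l
    have h0 := hd0 l
    refine ⟨?_, ?_, ?_⟩
    · have : 1/(2 * 2 ^ l) ≤ (1:ℝ)/2 := by
        rw [div_le_div_iff₀ (by linarith) (by norm_num)]
        linarith
      linarith
    · have : 1/(3 * (2:ℝ) ^ l) ≤ 1/(2 * 2 ^ l) := by
        rw [div_le_div_iff₀ (by linarith) (by linarith)]
        linarith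
      linarith
    · have : (0:ℝ) < 1/(3 * 2 ^ l) := by positivity
      linarith
  have hdiff_nonneg : ∀ l : ℕ,
      (0:ℝ) ≤ (1 - 1/(3 * 2 ^ l)) ^ k - (1 - 1/(2 * 2 ^ l)) ^ k := by
    intro l
    obtain ⟨h1, h2, h3⟩ := hδ l
    have := pow_le_pow_left₀ h1 h2 k
    linarith
  have hf_nonneg : ∀ l : ℕ, 0 ≤ f l := by
    intro l
    have := hdiff_nonneg l
    have := hd0 l
    positivity
  rw [← Finset.sum_filter_add_sum_filter_not (Finset.range L) (fun l => 2 ^ l < k)]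
  set a := Nat.log 2 k with ha
  -- PART A : small l (2^l < k)
  have partA : ∑ l ∈ (Finset.range L).filter (fun l => 2 ^ l < k), f l ≤ 9/2 := by
    -- per-term bound
    have hterm : ∀ l : ℕ, 2 ^ l < k → f l ≤ (3/2 : ℝ) * (3/4) ^ (a + 1 - l) := by
      intro l hl
      have h0 := hd0 l
      obtain ⟨hδ0, hδ12, hδ1⟩ := hδ l
      set u : ℝ := (k : ℝ) / 2 ^ l with hu
      have hu0 : 0 < u := by positivity
      -- exponential bound on (1 - 1/(3·2^l))^k
      have hexp1 : (1 - 1/(3 * (2:ℝ) ^ l)) ^ k ≤ Real.exp (-(u/3)) := by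
        have hb : (1 - 1/(3 * (2:ℝ) ^ l)) ≤ Real.exp (-(1/(3 * 2 ^ l))) := by
          have := Real.add_one_le_exp (-(1/(3 * (2:ℝ) ^ l)))
          linarith
        have hb0 : (0:ℝ) ≤ 1 - 1/(3 * 2 ^ l) := le_trans hδ0 hδ12
        calc (1 - 1/(3 * (2:ℝ) ^ l)) ^ k ≤ (Real.exp (-(1/(3 * 2 ^ l)))) ^ k :=
              pow_le_pow_left₀ hb0 hb k
          _ = Real.exp (-(u/3)) := by
              rw [← Real.exp_nat_mul]
              congr 1
              rw [hu, div_div, mul_comm ((2:ℝ) ^ l) (3:ℝ)]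
              ring
    -- diff² ≤ exp(-(u/3))²
      have hdiffsq : ((1 - 1/(3 * (2:ℝ) ^ l)) ^ k - (1 - 1/(2 * 2 ^ l)) ^ k) ^ 2
          ≤ Real.exp (-(u/3)) * Real.exp (-(u/3)) := by
        have h1 := hdiff_nonneg l
        have h2 : ((1 - 1/(3 * (2:ℝ) ^ l)) ^ k - (1 - 1/(2 * 2 ^ l)) ^ k)
            ≤ Real.exp (-(u/3)) := by
          have h3 : (0:ℝ) ≤ (1 - 1/(2 * 2 ^ l)) ^ k := pow_nonneg hδ0 k
          linarith
        nlinarith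
      -- u·exp(-(u/3)) ≤ 3/2
      have hue : u * Real.exp (-(u/3)) ≤ 3/2 := by
        have h1 : u/3 ≤ Real.exp (u/3 - 1) := by
          have := Real.add_one_le_exp (u/3 - 1)
          linarith
        have h2 : Real.exp (u/3 - 1) = Real.exp (u/3) * Real.exp (-1) := by
          rw [← Real.exp_add]; ring_nf
        have h3 : u * Real.exp (-(u/3)) ≤ 3 * Real.exp (-1) := by
          have h4 : 0 < Real.exp (-(u/3)) := Real.exp_pos _
          have h5 : u ≤ 3 * Real.exp (u/3) * Real.exp (-1) := by
            rw [h2] at h1; linarith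
          have h6 : Real.exp (u/3) * Real.exp (-(u/3)) = 1 := by
            rw [← Real.exp_add]; simp
          calc u * Real.exp (-(u/3)) ≤ (3 * Real.exp (u/3) * Real.exp (-1)) * Real.exp (-(u/3)) :=
                mul_le_mul_of_nonneg_right h5 (le_of_lt h4)
            _ = 3 * Real.exp (-1) * (Real.exp (u/3) * Real.exp (-(u/3))) := by ring
            _ = 3 * Real.exp (-1) := by rw [h6]; ring
        have h7 : Real.exp (-1) ≤ 1/2 := by
          have h8 : (2:ℝ) ≤ Real.exp 1 := by
            have := Real.add_one_le_exp (1:ℝ); linarith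
          rw [Real.exp_neg, inv_le_comm₀ (Real.exp_pos 1) (by norm_num)]
          norm_num
          linarith
        linarith
      -- exp(-(u/3)) ≤ (3/4)^(a+1-l)
      have hue2 : Real.exp (-(u/3)) ≤ (3/4 : ℝ) ^ (a + 1 - l) := by
        have hla : l ≤ a := Nat.le_log_of_pow_le (by norm_num) (le_of_lt hl)
        have hka : (2:ℝ) ^ a ≤ (k:ℝ) := by
          exact_mod_cast Nat.cast_le.mpr (Nat.pow_log_le_self 2 hk)
        have hu_ge : ((a + 1 - l : ℕ) : ℝ) ≤ u := by
          have e1 : (2:ℝ) ^ a = 2 ^ (a - l) * 2 ^ l := by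
            rw [← pow_add]
            congr 1
            omega
          have e2 : ((a - l : ℕ) : ℝ) + 1 ≤ (2:ℝ) ^ (a - l) := by
            have := Nat.lt_two_pow_self (n := a - l)
            exact_mod_cast this
          have e3 : (2:ℝ) ^ (a - l) ≤ u := by
            rw [hu, le_div_iff₀ (hd0 l), ← pow_add]
            have eal : a - l + l = a := by omega
            rw [eal]
            exact hka
          have e4 : ((a + 1 - l : ℕ) : ℝ) = ((a - l : ℕ) : ℝ) + 1 := by
            have : a + 1 - l = (a - l) + 1 := by omega
            rw [this]; push_cast; ring
          linarith
        have h34 : Real.exp (-(1/3)) ≤ 3/4 := by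
          have h1 : (4:ℝ)/3 ≤ Real.exp (1/3) := by
            have := Real.add_one_le_exp ((1:ℝ)/3); linarith
          rw [Real.exp_neg, inv_le_comm₀ (Real.exp_pos _) (by norm_num)]
          norm_num
          linarith
        calc Real.exp (-(u/3)) ≤ Real.exp (-(((a + 1 - l : ℕ):ℝ)/3)) := by
              apply Real.exp_le_exp.mpr
              linarith [hu_ge]
          _ = Real.exp (-(1/3)) ^ (a + 1 - l) := by
              rw [← Real.exp_nat_mul]
              congr 1
              ring
          _ ≤ (3/4 : ℝ) ^ (a + 1 - l) := pow_le_pow_left₀ (le_of_lt (Real.exp_pos _)) h34 _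
      -- combine
      calc f l = u * ((1 - 1/(3 * (2:ℝ) ^ l)) ^ k - (1 - 1/(2 * 2 ^ l)) ^ k) ^ 2 := rfl
        _ ≤ u * (Real.exp (-(u/3)) * Real.exp (-(u/3))) := by
            apply mul_le_mul_of_nonneg_left hdiffsq (le_of_lt hu0)
        _ = (u * Real.exp (-(u/3))) * Real.exp (-(u/3)) := by ring
        _ ≤ (3/2) * (3/4 : ℝ) ^ (a + 1 - l) := by
            apply mul_le_mul hue hue2 (le_of_lt (Real.exp_pos _))
            norm_num
    -- sum the per-term bounds
    calc ∑ l ∈ (Finset.range L).filter (fun l => 2 ^ l < k), f l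
        ≤ ∑ l ∈ (Finset.range L).filter (fun l => 2 ^ l < k),
            (3/2 : ℝ) * (3/4) ^ (a + 1 - l) := by
          refine Finset.sum_le_sum fun l hl => ?_
          exact hterm l (Finset.mem_filter.mp hl).2
      _ ≤ ∑ l ∈ Finset.range (a + 1), (3/2 : ℝ) * (3/4) ^ (a + 1 - l) := by
          apply Finset.sum_le_sum_of_subset_of_nonneg
          · intro l hl
            obtain ⟨-, h2⟩ := Finset.mem_filter.mp hl
            have : l ≤ a := Nat.le_log_of_pow_le (by norm_num) (le_of_lt h2)
            exact Finset.mem_range.mpr (by omega)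
          · intro l _ _
            positivity
      _ = (3/2:ℝ) * ∑ l ∈ Finset.range (a + 1), (3/4 : ℝ) ^ (a + 1 - l) := by
          rw [Finset.mul_sum]
      _ ≤ 9/2 := by
          have e1 : ∑ l ∈ Finset.range (a + 1), (3/4 : ℝ) ^ (a + 1 - l)
              = ∑ j ∈ Finset.range (a + 1), (3/4 : ℝ) ^ (j + 1) := by
            rw [← Finset.sum_range_reflect]
            refine Finset.sum_congr rfl fun j hj => ?_
            congr 1
            have := Finset.mem_range.mp hj
            omega
          have e2 : ∑ j ∈ Finset.range (a + 1), (3/4 : ℝ) ^ (j + 1)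
              = (3/4) * ∑ j ∈ Finset.range (a + 1), (3/4 : ℝ) ^ j := by
            rw [Finset.mul_sum]
            refine Finset.sum_congr rfl fun j _ => ?_
            rw [pow_succ]
            ring
          have e3 : ∑ j ∈ Finset.range (a + 1), (3/4 : ℝ) ^ j ≤ 4 := by
            have := geom_le (3/4) (by norm_num) (by norm_num) (a + 1)
            norm_num at this
            linarith
          rw [e1, e2]
          nlinarith
  -- PART B : large l (k ≤ 2^l)
  have partB : ∑ l ∈ (Finset.range L).filter (fun l => ¬ 2 ^ l < k), f l ≤ 1/2 := by
    set L0 := Nat.clog 2 k with hL0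
    have hterm : ∀ l : ℕ, ¬ (2 ^ l < k) → f l ≤ (k:ℝ)^3 / 36 * ((1:ℝ)/8) ^ l := by
      intro l hl
      push_neg at hl
      have h0 := hd0 l
      obtain ⟨hδ0, hδ12, hδ1⟩ := hδ l
      have hdiff : (1 - 1/(3 * (2:ℝ) ^ l)) ^ k - (1 - 1/(2 * 2 ^ l)) ^ k
          ≤ (k:ℝ) * (1/(6 * 2 ^ l)) := by
        have := pow_sub_pow_le_k (1 - 1/(3 * (2:ℝ) ^ l)) (1 - 1/(2 * 2 ^ l)) hδ0 hδ12 hδ1 k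
        have e : (1 - 1/(3 * (2:ℝ) ^ l)) - (1 - 1/(2 * 2 ^ l)) = 1/(6 * 2 ^ l) := by
          field_simp
          ring
        rw [e] at this
        exact this
      have hdn := hdiff_nonneg l
      have hsq : ((1 - 1/(3 * (2:ℝ) ^ l)) ^ k - (1 - 1/(2 * 2 ^ l)) ^ k) ^ 2
          ≤ ((k:ℝ) * (1/(6 * 2 ^ l))) ^ 2 := by
        nlinarith
      have hk0 : (0:ℝ) < k := by exact_mod_cast Nat.pos_of_ne_zero hk
      calc f l ≤ (k : ℝ) / 2 ^ l * ((k:ℝ) * (1/(6 * 2 ^ l))) ^ 2 := by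
            apply mul_le_mul_of_nonneg_left hsq (by positivity)
        _ = (k:ℝ)^3 / 36 * ((1:ℝ)/8) ^ l := by
            have e8 : ((1:ℝ)/8) ^ l = 1 / ((2:ℝ) ^ l) ^ 3 := by
              rw [div_pow, one_pow]
              congr 1
              rw [← pow_mul, mul_comm l 3, pow_mul]
              norm_num
            rw [e8]
            field_simp
            ring
    calc ∑ l ∈ (Finset.range L).filter (fun l => ¬ 2 ^ l < k), f l
        ≤ ∑ l ∈ (Finset.range L).filter (fun l => ¬ 2 ^ l < k),
            (k:ℝ)^3 / 36 * ((1:ℝ)/8) ^ l := by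
          refine Finset.sum_le_sum fun l hl => ?_
          exact hterm l (Finset.mem_filter.mp hl).2
      _ ≤ ∑ l ∈ Finset.Ico L0 L, (k:ℝ)^3 / 36 * ((1:ℝ)/8) ^ l := by
          apply Finset.sum_le_sum_of_subset_of_nonneg
          · intro l hl
            obtain ⟨h1, h2⟩ := Finset.mem_filter.mp hl
            push_neg at h2
            refine Finset.mem_Ico.mpr ⟨?_, Finset.mem_range.mp h1⟩
            exact (Nat.clog_le_iff_le_pow (by norm_num)).mpr h2
          · intro l _ _
            positivity
      _ ≤ 1/2 := by
          rw [Finset.sum_Ico_eq_sum_range]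
          have hkL0 : (k:ℝ) ≤ 2 ^ L0 := by
            exact_mod_cast Nat.cast_le.mpr (Nat.le_pow_clog (by norm_num) k)
          have hk0 : (0:ℝ) ≤ k := Nat.cast_nonneg k
          have hk3 : (k:ℝ)^3 * ((1:ℝ)/8) ^ L0 ≤ 1 := by
            have e8 : ((1:ℝ)/8) ^ L0 = 1 / ((2:ℝ) ^ L0) ^ 3 := by
              rw [div_pow, one_pow]
              congr 1
              rw [← pow_mul, mul_comm L0 3, pow_mul]
              norm_num
            rw [e8]
            have h2L : (0:ℝ) < (2:ℝ) ^ L0 := by positivity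
            rw [mul_one_div, div_le_one (by positivity)]
            exact pow_le_pow_left₀ hk0 hkL0 3
          have geo : ∑ i ∈ Finset.range (L - L0), ((1:ℝ)/8) ^ i ≤ (1 - 1/8)⁻¹ :=
            geom_le (1/8) (by norm_num) (by norm_num) _
          calc ∑ i ∈ Finset.range (L - L0), (k:ℝ)^3 / 36 * ((1:ℝ)/8) ^ (L0 + i)
              = ((k:ℝ)^3 * ((1:ℝ)/8) ^ L0 / 36) * ∑ i ∈ Finset.range (L - L0), ((1:ℝ)/8) ^ i := by
                rw [Finset.mul_sum]
                refine Finset.sum_congr rfl fun i _ => ?_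
                rw [pow_add]
                ring
            _ ≤ (1/36) * (1 - 1/8 : ℝ)⁻¹ := by
                apply mul_le_mul
                · linarith
                · exact geo
                · exact Finset.sum_nonneg fun i _ => by positivity
                · norm_num
            _ ≤ 1/2 := by norm_num
  linarith

end L310
namespace L310
open Finset

variable {n : ℕ}

lemma card_psupp_le (s : Fin n → Fin 4) : (psupp s).card ≤ n := by
  rw [psupp]
  exact le_trans (Finset.card_filter_le _ _) (by simp)

lemma psupp_zero : (psupp (0 : Fin n → Fin 4)).card = 0 := by
  simp [psupp]

lemma card_psupp_pos (s : Fin n → Fin 4) (hs : s ≠ 0) : 1 ≤ (psupp s).card := by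
  obtain ⟨j, hj⟩ : ∃ j, s j ≠ 0 := by
    by_contra hc
    push_neg at hc
    exact hs (funext hc)
  exact Finset.card_pos.mpr ⟨j, by simp [psupp, hj]⟩

lemma var_partition (A : QOp n) :
    var A = ∑ l ∈ Finset.range (n + 1), wApprox (2 ^ l) A := by
  rw [var_eq]
  have h1 : ∀ l, wApprox (2 ^ l) A = ∑ s : Fin n → Fin 4,
      if 2 ^ l ≤ (psupp s).card ∧ (psupp s).card < 2 * 2 ^ l then ‖coef A s‖ ^ 2 else 0 := by
    intro l
    rw [wApprox, Finset.sum_filter]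
  rw [Finset.sum_congr rfl fun l _ => h1 l, Finset.sum_comm, Finset.sum_filter]
  refine Finset.sum_congr rfl fun s _ => ?_
  symm
  by_cases hs : s = 0
  · subst hs
    rw [if_neg (by simp)]
    refine Finset.sum_eq_zero fun l _ => if_neg ?_
    rw [psupp_zero]
    rintro ⟨h1, -⟩
    have h2 : 0 < 2 ^ l := pow_pos (by norm_num) l
    omega
  · rw [if_pos hs]
    set k := (psupp s).card with hk
    have hk0 : k ≠ 0 := by
      have := card_psupp_pos s hs
      omega
    calc (∑ l ∈ Finset.range (n + 1),
          if 2 ^ l ≤ k ∧ k < 2 * 2 ^ l then ‖coef A s‖ ^ 2 else 0)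
        = (if 2 ^ (Nat.log 2 k) ≤ k ∧ k < 2 * 2 ^ (Nat.log 2 k)
            then ‖coef A s‖ ^ 2 else 0) := by
          apply Finset.sum_eq_single (Nat.log 2 k)
          · intro l _ hl
            refine if_neg fun ⟨hc1, hc2⟩ => ?_
            exact hl (Nat.log_eq_of_pow_le_of_lt_pow hc1 (by
              rw [pow_succ]
              omega)).symm
          · intro hmem
            exfalso
            apply hmem
            refine Finset.mem_range.mpr ?_
            have h1 : Nat.log 2 k ≤ k := Nat.log_le_self 2 k
            have h2 : k ≤ n := card_psupp_le s
            omega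
      _ = ‖coef A s‖ ^ 2 := by
          rw [if_pos]
          constructor
          · exact Nat.pow_log_le_self 2 hk0
          · have := Nat.lt_pow_succ_log_self (by norm_num : 1 < 2) k
            rw [pow_succ] at this
            omega

theorem main (A : QOp n) :
    var A ≤ 2 * ∑' l : ℕ,
      {m : ℕ | (1 / 20) * infPTotal 2 (softChunk (2 ^ m) A)
          ≤ (2 ^ m : ℝ) * wApprox (2 ^ m) A}.indicator
        (fun m => wApprox (2 ^ m) A) l := by
  classical
  set G : Set ℕ := {m : ℕ | (1 / 20) * infPTotal 2 (softChunk (2 ^ m) A)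
          ≤ (2 ^ m : ℝ) * wApprox (2 ^ m) A} with hG
  have hWnn : ∀ m : ℕ, 0 ≤ wApprox (2 ^ m) A := by
    intro m
    rw [wApprox]
    exact Finset.sum_nonneg fun s _ => by positivity
  have hIeq : ∀ m : ℕ, infPTotal 2 (softChunk (2 ^ m) A)
      = ∑ s : Fin n → Fin 4, ((psupp s).card : ℝ) *
        (((1 - 1/(3 * (2:ℝ) ^ m)) ^ (psupp s).card
          - (1 - 1/(2 * (2:ℝ) ^ m)) ^ (psupp s).card) ^ 2 * ‖coef A s‖ ^ 2) := by
    intro m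
    rw [infPTotal_eq]
    refine Finset.sum_congr rfl fun s _ => ?_
    rw [norm_coef_softChunk_sq]
    have hc : ((2 ^ m : ℕ) : ℝ) = (2:ℝ) ^ m := by push_cast; ring
    rw [hc]
  have hInn : ∀ m : ℕ, 0 ≤ infPTotal 2 (softChunk (2 ^ m) A) := by
    intro m
    rw [hIeq]
    exact Finset.sum_nonneg fun s _ => by positivity
  -- the tsum is a finite sum
  have hW0 : ∀ m : ℕ, m ∉ Finset.range (n + 1) →
      G.indicator (fun m => wApprox (2 ^ m) A) m = 0 := by
    intro m hm
    have hm' : n + 1 ≤ m := by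
      by_contra hc
      exact hm (Finset.mem_range.mpr (by omega))
    have hzero : wApprox (2 ^ m) A = 0 := by
      rw [wApprox]
      refine Finset.sum_eq_zero fun s hs => ?_
      exfalso
      have h1 := (Finset.mem_filter.mp hs).2.1
      have h2 : (psupp s).card ≤ n := card_psupp_le s
      have h3 : m < 2 ^ m := Nat.lt_two_pow_self
      omega
    rw [Set.indicator_apply]
    split <;> simp [hzero]
  have htsum : ∑' l : ℕ, G.indicator (fun m => wApprox (2 ^ m) A) l
      = ∑ l ∈ Finset.range (n + 1), G.indicator (fun m => wApprox (2 ^ m) A) l :=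
    tsum_eq_sum hW0
  have hgood_eq : ∑ l ∈ Finset.range (n + 1), G.indicator (fun m => wApprox (2 ^ m) A) l
      = ∑ l ∈ (Finset.range (n + 1)).filter (fun l => l ∈ G), wApprox (2 ^ l) A := by
    rw [Finset.sum_filter]
    refine Finset.sum_congr rfl fun l _ => ?_
    by_cases h : l ∈ G
    · simp [Set.indicator_apply, h]
    · simp [Set.indicator_apply, h]
  -- bad term bound
  have hbad : ∀ l : ℕ, l ∉ G → wApprox (2 ^ l) A
      ≤ (1/20) * ((1/(2:ℝ) ^ l) * infPTotal 2 (softChunk (2 ^ l) A)) := by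
    intro l hl
    have hl' : (2 ^ l : ℝ) * wApprox (2 ^ l) A
        < (1 / 20) * infPTotal 2 (softChunk (2 ^ l) A) := by
      have := hl
      rw [hG, Set.mem_setOf_eq, not_le] at this
      exact this
    have h2 : (0:ℝ) < 2 ^ l := by positivity
    have h3 : wApprox (2 ^ l) A < (1/20) * infPTotal 2 (softChunk (2 ^ l) A) / 2 ^ l := by
      rw [lt_div_iff₀ h2]
      linarith
    have e : (1/20) * infPTotal 2 (softChunk (2 ^ l) A) / 2 ^ l
        = (1/20) * ((1/(2:ℝ) ^ l) * infPTotal 2 (softChunk (2 ^ l) A)) := by ring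
    linarith [e ▸ h3]
  -- total influence sum bound
  have hIsum : ∑ l ∈ Finset.range (n + 1),
      (1/(2:ℝ) ^ l) * infPTotal 2 (softChunk (2 ^ l) A) ≤ 10 * var A := by
    have h1 : ∀ l : ℕ, (1/(2:ℝ) ^ l) * infPTotal 2 (softChunk (2 ^ l) A)
        = ∑ s : Fin n → Fin 4, ((psupp s).card : ℝ) / 2 ^ l *
            ((1 - 1/(3 * (2:ℝ) ^ l)) ^ (psupp s).card
              - (1 - 1/(2 * (2:ℝ) ^ l)) ^ (psupp s).card) ^ 2 * ‖coef A s‖ ^ 2 := by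
      intro l
      rw [hIeq l, Finset.mul_sum]
      exact Finset.sum_congr rfl fun s _ => by ring
    rw [Finset.sum_congr rfl fun l _ => h1 l, Finset.sum_comm, var_eq, Finset.mul_sum]
    rw [show (∑ s : Fin n → Fin 4, ∑ l ∈ Finset.range (n + 1),
        ((psupp s).card : ℝ) / 2 ^ l *
            ((1 - 1/(3 * (2:ℝ) ^ l)) ^ (psupp s).card
              - (1 - 1/(2 * (2:ℝ) ^ l)) ^ (psupp s).card) ^ 2 * ‖coef A s‖ ^ 2)
      = ∑ s ∈ Finset.univ.filter (fun s : Fin n → Fin 4 => s ≠ 0),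
          ∑ l ∈ Finset.range (n + 1),
          ((psupp s).card : ℝ) / 2 ^ l *
            ((1 - 1/(3 * (2:ℝ) ^ l)) ^ (psupp s).card
              - (1 - 1/(2 * (2:ℝ) ^ l)) ^ (psupp s).card) ^ 2 * ‖coef A s‖ ^ 2 from ?_]
    · refine Finset.sum_le_sum fun s hs => ?_
      have hv : (0:ℝ) ≤ ‖coef A s‖ ^ 2 := by positivity
      calc ∑ l ∈ Finset.range (n + 1),
          ((psupp s).card : ℝ) / 2 ^ l *
            ((1 - 1/(3 * (2:ℝ) ^ l)) ^ (psupp s).card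
              - (1 - 1/(2 * (2:ℝ) ^ l)) ^ (psupp s).card) ^ 2 * ‖coef A s‖ ^ 2
          = (∑ l ∈ Finset.range (n + 1),
            ((psupp s).card : ℝ) / 2 ^ l *
            ((1 - 1/(3 * (2:ℝ) ^ l)) ^ (psupp s).card
              - (1 - 1/(2 * (2:ℝ) ^ l)) ^ (psupp s).card) ^ 2) * ‖coef A s‖ ^ 2 := by
            rw [Finset.sum_mul]
        _ ≤ 10 * ‖coef A s‖ ^ 2 :=
            mul_le_mul_of_nonneg_right (analysis (psupp s).card (n + 1)) hv
    · symm
      apply Finset.sum_filter_of_ne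
      intro s _ hne
      by_contra hs0
      apply hne
      have hs' : s = 0 := hs0
      subst hs'
      refine Finset.sum_eq_zero fun l _ => ?_
      rw [psupp_zero]
      norm_num
  -- assemble
  have hpart := var_partition A
  have hsplit := (Finset.sum_filter_add_sum_filter_not (Finset.range (n + 1))
    (fun l => l ∈ G) (fun l => wApprox (2 ^ l) A)).symm
  have hbadsum : ∑ l ∈ (Finset.range (n + 1)).filter (fun l => l ∉ G), wApprox (2 ^ l) A
      ≤ (1/2) * var A := by
    calc ∑ l ∈ (Finset.range (n + 1)).filter (fun l => l ∉ G), wApprox (2 ^ l) A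
        ≤ ∑ l ∈ (Finset.range (n + 1)).filter (fun l => l ∉ G),
            (1/20) * ((1/(2:ℝ) ^ l) * infPTotal 2 (softChunk (2 ^ l) A)) :=
          Finset.sum_le_sum fun l hl => hbad l (Finset.mem_filter.mp hl).2
      _ ≤ ∑ l ∈ Finset.range (n + 1),
            (1/20) * ((1/(2:ℝ) ^ l) * infPTotal 2 (softChunk (2 ^ l) A)) := by
          apply Finset.sum_le_sum_of_subset_of_nonneg (Finset.filter_subset _ _)
          intro l _ _
          have h1 := hInn l
          have h2 : (0:ℝ) ≤ 1/(2:ℝ) ^ l := by positivity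
          positivity
      _ = (1/20) * ∑ l ∈ Finset.range (n + 1),
            (1/(2:ℝ) ^ l) * infPTotal 2 (softChunk (2 ^ l) A) := by
          rw [Finset.mul_sum]
      _ ≤ (1/20) * (10 * var A) :=
          mul_le_mul_of_nonneg_left hIsum (by norm_num)
      _ = (1/2) * var A := by ring
  rw [htsum, hgood_eq]
  have : var A = ∑ l ∈ (Finset.range (n + 1)).filter (fun l => l ∈ G), wApprox (2 ^ l) A
      + ∑ l ∈ (Finset.range (n + 1)).filter (fun l => l ∉ G), wApprox (2 ^ l) A := by
    rw [hpart]
    exact hsplit.symm ▸ rfl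
  linarith

end L310

/-- **Lemma 3.10**: `Var[A] ≤ 2 ∑_{d ∈ G_good} W_{≈d}[A]`, where
`G_good = {d = 2ˡ : d · W_{≈d}[A] ≥ Inf[B_d]/20}` and `B_d` is the soft chunk. -/
theorem var_le_good_chunks' (n : ℕ) (A : QOp n) :
    var A ≤ 2 * ∑' l : ℕ,
      {m : ℕ | (1 / 20) * infPTotal 2 (softChunk (2 ^ m) A)
          ≤ (2 ^ m : ℝ) * wApprox (2 ^ m) A}.indicator
        (fun m => wApprox (2 ^ m) A) l := by
  exact L310.main A

end
end
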